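/- arXiv:2510.19120 — 4 statements merged into one kernel-verified Lean document; each statement's English description precedes it below -/
import Mathlib

section
/- Let δ ∈ ℕ⁺ and ρ ∈ ℕ∪{0}. Let G be a finite simple graph and let (T,u) be a (δ·2^{ρ²},ρ)-regular rooted tree such that T is a subgraph of G. Then there is a (δ,ρ)-regular rooted subtree (T',u) of (T,u) that is path-uniform in G. -/
/-- The induced subgraph of `G` on `S` is nonempty and connected, expressed via
walks of `G` staying inside `S`. -/
def ConnectedIn {V : Type*} (G : SimpleGraph V) (S : Set V) : Prop :=
  S.Nonempty ∧ ∀ a ∈ S, ∀ b ∈ S, ∃ w : G.Walk a b, ∀ v ∈ w.support, v ∈ S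

/-- An induced `H`-model in `G`: pairwise disjoint nonempty connected branch sets,
joined by an edge iff the corresponding vertices of `H` are adjacent. -/
def IsInducedModel {W V : Type*} (H : SimpleGraph W) (G : SimpleGraph V) (X : W → Set V) : Prop :=
  (∀ w, ConnectedIn G (X w)) ∧
  (∀ w w', w ≠ w' → Disjoint (X w) (X w')) ∧
  (∀ w w', H.Adj w w' → ∃ a ∈ X w, ∃ b ∈ X w', G.Adj a b) ∧
  (∀ w w', w ≠ w' → ¬ H.Adj w w' → ∀ a ∈ X w, ∀ b ∈ X w', ¬ G.Adj a b)

/-- `G` has an induced minor isomorphic to `H`. -/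
def InducedMinor {W V : Type*} (H : SimpleGraph W) (G : SimpleGraph V) : Prop :=
  ∃ X : W → Set V, IsInducedModel H G X

/-- An `H`-model in `G` (for the minor relation). -/
def IsMinorModel {W V : Type*} (H : SimpleGraph W) (G : SimpleGraph V) (X : W → Set V) : Prop :=
  (∀ w, ConnectedIn G (X w)) ∧
  (∀ w w', w ≠ w' → Disjoint (X w) (X w')) ∧
  (∀ w w', H.Adj w w' → ∃ a ∈ X w, ∃ b ∈ X w', G.Adj a b)

/-- `G` has a minor isomorphic to `H`. -/
def HasMinor {W V : Type*} (H : SimpleGraph W) (G : SimpleGraph V) : Prop :=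
  ∃ X : W → Set V, IsMinorModel H G X

/-- `(T, β)` is a tree decomposition of `G`. -/
structure IsTreeDecomp {V ι : Type*} (G : SimpleGraph V) (T : SimpleGraph ι)
    (β : ι → Finset V) : Prop where
  tree : T.IsTree
  bags_connected : ∀ v : V, ConnectedIn T {i | v ∈ β i}
  edges_covered : ∀ u v : V, G.Adj u v → ∃ i, u ∈ β i ∧ v ∈ β i

/-- `G` has a tree decomposition of width at most `w`. -/
def TreewidthLE {V : Type*} (G : SimpleGraph V) (w : ℕ) : Prop :=
  ∃ (n : ℕ) (T : SimpleGraph (Fin n)) (β : Fin n → Finset V),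
    IsTreeDecomp G T β ∧ ∀ i, (β i).card ≤ w + 1

noncomputable def treewidth {V : Type*} (G : SimpleGraph V) : ℕ :=
  sInf {w | TreewidthLE G w}

/-- `G` has a path decomposition of width at most `w`. -/
def PathwidthLE {V : Type*} (G : SimpleGraph V) (w : ℕ) : Prop :=
  ∃ (n : ℕ) (β : Fin n → Finset V),
    IsTreeDecomp G (SimpleGraph.pathGraph n) β ∧ ∀ i, (β i).card ≤ w + 1

noncomputable def pathwidth {V : Type*} (G : SimpleGraph V) : ℕ :=
  sInf {w | PathwidthLE G w}

/-- A hereditary class of finite graphs (each finite graph is represented, up to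
isomorphism, on some `Fin n`): the class is closed under induced subgraphs,
i.e. under pulling back along injections. -/
def Hereditary (𝒢 : ∀ n : ℕ, SimpleGraph (Fin n) → Prop) : Prop :=
  ∀ (n m : ℕ) (G : SimpleGraph (Fin n)) (f : Fin m ↪ Fin n),
    𝒢 n G → 𝒢 m (G.comap ⇑f)

/-- A graph `J` is `ζ`-jagged if every induced subgraph with pathwidth at least 3
has at least `ζ` vertices of degree two (in that induced subgraph). -/
def Jagged {V : Type*} (ζ : ℕ) (J : SimpleGraph V) : Prop :=
  ∀ s : Set V, 3 ≤ pathwidth (J.induce s) →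
    ζ ≤ {v | v ∈ s ∧ ({w | w ∈ s ∧ J.Adj v w}).ncard = 2}.ncard

/-- A graph is `d`-degenerate if every nonempty induced subgraph has a vertex of
degree at most `d`. -/
def Degenerate {V : Type*} (d : ℕ) (G : SimpleGraph V) : Prop :=
  ∀ s : Set V, s.Nonempty → ∃ v ∈ s, ({w | w ∈ s ∧ G.Adj v w}).ncard ≤ d

/-- The complete binary tree of radius `ρ`: vertices are binary strings of length
at most `ρ`, and `x` is adjacent to `b :: x` (its children). -/
def binTree (ρ : ℕ) : SimpleGraph {l : List Bool // l.length ≤ ρ} where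
  Adj x y := (∃ b : Bool, (x : List Bool) = b :: (y : List Bool)) ∨
             (∃ b : Bool, (y : List Bool) = b :: (x : List Bool))
  symm := by constructor; rintro x y (h | h); exact Or.inr h; exact Or.inl h
  loopless := by
    constructor
    rintro x (⟨b, hb⟩ | ⟨b, hb⟩) <;>
      · have := congrArg List.length hb
        simp at this

/-- The `n × n` square grid graph. -/
def gridGraph (n : ℕ) : SimpleGraph (Fin n × Fin n) where
  Adj p q := (p.1 = q.1 ∧ ((p.2 : ℕ) + 1 = (q.2 : ℕ) ∨ (q.2 : ℕ) + 1 = (p.2 : ℕ))) ∨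
             (p.2 = q.2 ∧ ((p.1 : ℕ) + 1 = (q.1 : ℕ) ∨ (q.1 : ℕ) + 1 = (p.1 : ℕ)))
  symm := by
    constructor
    rintro p q (⟨h1, h2⟩ | ⟨h1, h2⟩)
    · exact Or.inl ⟨h1.symm, h2.symm⟩
    · exact Or.inr ⟨h1.symm, h2.symm⟩
  loopless := by constructor; rintro p (⟨_, h | h⟩ | ⟨_, h | h⟩) <;> omega

/-- A graph is planar iff it is isomorphic to a minor of some square grid. -/
def IsPlanar {W : Type*} (H : SimpleGraph W) : Prop :=
  ∃ n : ℕ, HasMinor H (gridGraph n)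

/-- `S` is the vertex set of an induced path in `G` from `x` to `y`. -/
def IsInducedPathSet {V : Type*} (G : SimpleGraph V) (S : Set V) (x y : V) : Prop :=
  ∃ p : G.Walk x y, p.IsPath ∧ {v | v ∈ p.support} = S ∧
    ∀ u v : V, u ∈ p.support → v ∈ p.support → G.Adj u v → p.toSubgraph.Adj u v

/-- `G` has a stable strong `(κ, lam)`-block: a stable set `B` of at least `κ`
vertices together with, for each unordered pair of distinct vertices of `B`,
at least `lam` pairwise internally disjoint induced paths joining them, such that
path systems of distinct pairs meet exactly in the shared endpoints. -/
def HasStableStrongBlock {V : Type*} (G : SimpleGraph V) (κ lam : ℕ) : Prop :=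
  ∃ (B : Set V) (P : V → V → Fin lam → Set V),
    κ ≤ B.ncard ∧
    (∀ x ∈ B, ∀ y ∈ B, x ≠ y → ¬ G.Adj x y) ∧
    (∀ x ∈ B, ∀ y ∈ B, x ≠ y →
      (∀ i, IsInducedPathSet G (P x y i) x y) ∧
      (∀ i j, i ≠ j → ∀ v, v ∈ P x y i → v ∈ P x y j → v = x ∨ v = y) ∧
      (∀ i, P x y i = P y x i)) ∧
    (∀ x ∈ B, ∀ y ∈ B, ∀ x' ∈ B, ∀ y' ∈ B, x ≠ y → x' ≠ y' →
      ({x, y} : Set V) ≠ {x', y'} →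
      (⋃ i, P x y i) ∩ (⋃ i, P x' y' i) = (({x, y} : Set V) ∩ {x', y'}))

/-- `G` is `(κ, lam)`-separable: there is no stable strong `(κ, lam)`-block in `G`. -/
def Separable {V : Type*} (G : SimpleGraph V) (κ lam : ℕ) : Prop :=
  ¬ HasStableStrongBlock G κ lam

/-- In the tree `T` rooted at `u`, `w` is a child of `v`. -/
def IsChild {α : Type*} (T : SimpleGraph α) (u v w : α) : Prop :=
  T.Adj v w ∧ T.dist u w = T.dist u v + 1

/-- `(T, u)` is a `(δ, ρ)`-regular rooted tree: `T` is a tree, every vertex is at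
distance at most `ρ` from `u`, and every vertex at distance less than `ρ` from `u`
has exactly `δ` children. -/
def RootedRegular {α : Type*} (T : SimpleGraph α) (u : α) (δ ρ : ℕ) : Prop :=
  T.IsTree ∧ (∀ v, T.dist u v ≤ ρ) ∧
    ∀ v, T.dist u v < ρ → {w | IsChild T u v w}.ncard = δ

/-- The rooted tree induced by `T` on `s`, with root `r`, is a rooted subtree of
`(T, u)`: it is a tree and every child relation in it is a child relation in `(T, u)`. -/
def IsRootedSubtree {α : Type*} (T : SimpleGraph α) (u : α) (s : Set α) (r : ↥s) : Prop :=
  (T.induce s).IsTree ∧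
    ∀ v w : ↥s, IsChild (T.induce s) r v w → IsChild T u (↑v) (↑w)

open Classical in
/-- The `i`-ancestor of `v` in the tree `T` rooted at `u`: the vertex on the unique
`u`–`v` path at distance `i` from `v`. -/
noncomputable def ancestor {α : Type*} (T : SimpleGraph α) (u v : α) (i : ℕ) : α :=
  if h : ∃ w, T.dist u w + i = T.dist u v ∧ T.dist w v = i then h.choose else v

/-- The rooted tree `T` (mapped into `G` by `f`) is path-uniform in `G`. -/
def PathUniform {V β : Type*} (G : SimpleGraph V) (f : β → V) (T : SimpleGraph β)
    (r : β) (ρ : ℕ) : Prop :=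
  ∀ v v' : β, T.dist r v = ρ → T.dist r v' = ρ → ∀ i j : ℕ, i ≤ ρ → j ≤ ρ →
    (G.Adj (f (ancestor T r v i)) (f (ancestor T r v j)) ↔
      G.Adj (f (ancestor T r v' i)) (f (ancestor T r v' j)))

/-- The rooted tree `T` (mapped into `G` by `f`) is path-induced in `G`. -/
def PathInduced {V β : Type*} (G : SimpleGraph V) (f : β → V) (T : SimpleGraph β)
    (r : β) (ρ : ℕ) : Prop :=
  ∀ v : β, T.dist r v = ρ → ∀ i j : ℕ, i ≤ ρ → j ≤ ρ →
    (G.Adj (f (ancestor T r v i)) (f (ancestor T r v j)) ↔ (i + 1 = j ∨ j + 1 = i))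

/-- The rooted tree `T` (mapped into `G` by `f`) is branch-induced in `G`: every
`G`-edge between vertices of `T` that is not a `T`-edge joins a vertex to one of
its ancestors. -/
def BranchInduced {V β : Type*} (G : SimpleGraph V) (f : β → V) (T : SimpleGraph β)
    (r : β) : Prop :=
  ∀ v w : β, G.Adj (f v) (f w) → ¬ T.Adj v w →
    (T.dist r v + T.dist v w = T.dist r w ∨ T.dist r w + T.dist w v = T.dist r v)

/-- `G` has a (not necessarily induced) subgraph isomorphic to `H`. -/
def HasSubgraphIso {W V : Type*} (H : SimpleGraph W) (G : SimpleGraph V) : Prop :=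
  ∃ f : W → V, Function.Injective f ∧ ∀ a b, H.Adj a b → G.Adj (f a) (f b)

/-- The spanning subgraph of `G` consisting of the edges of color `i` under the
edge-coloring `F`. -/
def colorSub {V : Type*} {c : ℕ} (G : SimpleGraph V) (F : V → V → Fin c) (i : Fin c) :
    SimpleGraph V where
  Adj u v := G.Adj u v ∧ F u v = i ∧ F v u = i
  symm := by constructor; rintro u v ⟨h1, h2, h3⟩; exact ⟨h1.symm, h3, h2⟩
  loopless := by constructor; rintro u ⟨h, _, _⟩; exact G.irrefl h

/-- Distance from `a` to `b` within the induced subgraph `G[S]` (via walks of `G`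
all of whose vertices lie in `S`). -/
noncomputable def distIn {V : Type*} (G : SimpleGraph V) (S : Set V) (a b : V) : ℕ :=
  sInf {n | ∃ w : G.Walk a b, w.length = n ∧ ∀ v ∈ w.support, v ∈ S}

/-- `(a 0, …, a (σ+1))` is a `(σ, θ)`-`X`-abyss in `G`. -/
def IsAbyss {V : Type*} (G : SimpleGraph V) (X : Set V) (σ θ : ℕ) (a : ℕ → V) : Prop :=
  ∃ (S : ℕ → Set V) (ρ : ℕ → ℕ),
    S 0 ⊆ X ∧ ConnectedIn G (S 0) ∧ (∀ k ≤ σ + 1, a k ∈ S 0) ∧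
    (∀ i < σ,
      S (i + 1) ⊆ {v | v ∈ S i ∧ distIn G (S i) (a i) v = ρ i + 1} ∧
      ConnectedIn G (S (i + 1)) ∧
      ∀ k, i + 1 ≤ k → k ≤ σ + 1 → a k ∈ S (i + 1)) ∧
    θ ≤ G.dist (a σ) (a (σ + 1))

/-- The torso of a tree decomposition `(T, β)` of `G` at the node `x`. -/
def torso {V ι : Type*} (G : SimpleGraph V) (T : SimpleGraph ι) (β : ι → Finset V)
    (x : ι) : SimpleGraph {v : V // v ∈ β x} where
  Adj u v := u ≠ v ∧ (G.Adj ↑u ↑v ∨ ∃ y, T.Adj x y ∧ ↑u ∈ β y ∧ ↑v ∈ β y)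
  symm := by
    constructor
    rintro u v ⟨hne, h | ⟨y, hy, h1, h2⟩⟩
    · exact ⟨hne.symm, Or.inl h.symm⟩
    · exact ⟨hne.symm, Or.inr ⟨y, hy, h2, h1⟩⟩
  loopless := by constructor; rintro u ⟨hne, _⟩; exact hne rfl

/-- The vertex set of the component of `T - x` containing `y` (denoted `T_{y∖x}`). -/
def compAway {ι : Type*} (T : SimpleGraph ι) (y x : ι) : Set ι :=
  {z | ∃ w : T.Walk y z, x ∉ w.support}

/-- A tree decomposition `(T, β)` of `G` is tight. -/
def Tight {V ι : Type*} (G : SimpleGraph V) (T : SimpleGraph ι) (β : ι → Finset V) : Prop :=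
  ∀ x y, T.Adj x y →
    ∃ v₀ ∈ (⋃ z ∈ compAway T y x, (β z : Set V)) \ (⋃ z ∈ compAway T x y, (β z : Set V)),
      ∀ u : V, u ∈ β x → u ∈ β y →
        ∃ c : V, G.Adj u c ∧ ∃ w : G.Walk v₀ c, ∀ p ∈ w.support,
          p ∈ (⋃ z ∈ compAway T y x, (β z : Set V)) \ (⋃ z ∈ compAway T x y, (β z : Set V))

/-- `G` has a subgraph isomorphic to some subdivision of the complete graph `K_μ`:
equivalently, there are `μ` branch vertices joined by pairwise internally disjoint
paths of nonzero length. -/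
def HasKSubdivision {V : Type*} (μ : ℕ) (G : SimpleGraph V) : Prop :=
  ∃ b : Fin μ → V, Function.Injective b ∧
    ∃ P : ∀ i j : Fin μ, i < j → G.Walk (b i) (b j),
      (∀ i j (h : i < j), (P i j h).IsPath) ∧
      (∀ i j (h : i < j), ∀ m : Fin μ, b m ∈ (P i j h).support → m = i ∨ m = j) ∧
      (∀ i j (h : i < j), ∀ k l (h' : k < l), (i, j) ≠ (k, l) →
        ∀ v : V, v ∈ (P i j h).support → v ∈ (P k l h').support →
          (v = b i ∨ v = b j) ∧ (v = b k ∨ v = b l))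


/-! ### Auxiliary development for Statement 8 -/

namespace S8

open SimpleGraph

variable {α : Type} [Fintype α]

set_option linter.unusedSectionVars false

/-- parent of `v` in the tree `T` rooted at `u` -/
noncomputable def par (T : SimpleGraph α) (u v : α) : α :=
  letI := Classical.propDecidable
  if h : ∃ w, T.Adj w v ∧ T.dist u w + 1 = T.dist u v then h.choose else v

lemma par_root (T : SimpleGraph α) (u : α) : par T u u = u := by
  rw [par, dif_neg]
  rintro ⟨w, -, hw⟩
  simp [SimpleGraph.dist_self] at hw

lemma parent_exists {T : SimpleGraph α} (hc : T.Connected) {u v : α} (hv : 0 < T.dist u v) :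
    ∃ w, T.Adj w v ∧ T.dist u w + 1 = T.dist u v := by
  have hne : v ≠ u := by
    rintro rfl
    simp [SimpleGraph.dist_self] at hv
  obtain ⟨p, hp⟩ := hc.exists_walk_length_eq_dist u v
  obtain ⟨w, hadj, q, hq⟩ := SimpleGraph.Walk.exists_eq_cons_of_ne hne p.reverse
  have hlen : q.length + 1 = T.dist u v := by
    have h1 : p.reverse.length = p.length := SimpleGraph.Walk.length_reverse p
    rw [hq] at h1
    simp only [SimpleGraph.Walk.length_cons] at h1
    omega
  have h1 : T.dist u w ≤ q.length := by
    have := SimpleGraph.dist_le q.reverse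
    simpa using this
  have h2 : T.dist u v ≤ T.dist u w + 1 := by
    have ht := hc.dist_triangle (u := u) (v := w) (w := v)
    have hwv : T.dist w v ≤ 1 := SimpleGraph.dist_le hadj.symm.toWalk
    omega
  exact ⟨w, hadj.symm, by omega⟩

lemma parent_unique {T : SimpleGraph α} (hT : T.IsTree) {u a b v : α}
    (h1 : T.Adj a v) (ha : T.dist u a + 1 = T.dist u v)
    (h2 : T.Adj b v) (hb : T.dist u b + 1 = T.dist u v) : a = b := by
  classical
  have hc := hT.1
  obtain ⟨pa, hpa⟩ := hc.exists_walk_length_eq_dist u a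
  obtain ⟨pb, hpb⟩ := hc.exists_walk_length_eq_dist u b
  have hpa' : pa.bypass.IsPath := pa.bypass_isPath
  have hpb' : pb.bypass.IsPath := pb.bypass_isPath
  have hlena : pa.bypass.length = T.dist u a :=
    le_antisymm (hpa ▸ pa.length_bypass_le) (SimpleGraph.dist_le _)
  have hlenb : pb.bypass.length = T.dist u b :=
    le_antisymm (hpb ▸ pb.length_bypass_le) (SimpleGraph.dist_le _)
  have hva : v ∉ pa.bypass.support := by
    intro hv
    have h3 := SimpleGraph.Walk.length_takeUntil_le pa.bypass hv
    have h4 := SimpleGraph.dist_le (pa.bypass.takeUntil v hv)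
    omega
  have hvb : v ∉ pb.bypass.support := by
    intro hv
    have h3 := SimpleGraph.Walk.length_takeUntil_le pb.bypass hv
    have h4 := SimpleGraph.dist_le (pb.bypass.takeUntil v hv)
    omega
  have hwa : (pa.bypass.concat h1).IsPath := by
    rw [SimpleGraph.Walk.isPath_def, SimpleGraph.Walk.support_concat,
      List.nodup_append]
    refine ⟨(SimpleGraph.Walk.isPath_def _).mp hpa', by simp, ?_⟩
    intro x hx _ hx' hxy
    simp only [List.mem_singleton] at hx'
    subst hx'
    subst hxy; exact hva hx
  have hwb : (pb.bypass.concat h2).IsPath := by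
    rw [SimpleGraph.Walk.isPath_def, SimpleGraph.Walk.support_concat,
      List.nodup_append]
    refine ⟨(SimpleGraph.Walk.isPath_def _).mp hpb', by simp, ?_⟩
    intro x hx _ hx' hxy
    simp only [List.mem_singleton] at hx'
    subst hx'
    subst hxy; exact hvb hx
  have hpq : (⟨pa.bypass.concat h1, hwa⟩ : T.Path u v) = ⟨pb.bypass.concat h2, hwb⟩ :=
    hT.2.path_unique _ _
  have heq : pa.bypass.concat h1 = pb.bypass.concat h2 := congrArg Subtype.val hpq
  have hga : (pa.bypass.concat h1).getVert (T.dist u a) = a := by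
    rw [SimpleGraph.Walk.concat_eq_append, SimpleGraph.Walk.getVert_append]
    rw [hlena]
    simp
  have hgb : (pb.bypass.concat h2).getVert (T.dist u a) = b := by
    rw [SimpleGraph.Walk.concat_eq_append, SimpleGraph.Walk.getVert_append]
    rw [hlenb, show T.dist u a = T.dist u b by omega]
    simp
  rw [← hga, ← hgb, heq]

lemma par_spec {T : SimpleGraph α} (hc : T.Connected) {u v : α} (hv : 0 < T.dist u v) :
    T.Adj (par T u v) v ∧ T.dist u (par T u v) + 1 = T.dist u v := by
  rw [par, dif_pos (parent_exists hc hv)]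
  exact (parent_exists hc hv).choose_spec

lemma par_eq {T : SimpleGraph α} (hT : T.IsTree) {u a v : α}
    (h1 : T.Adj a v) (ha : T.dist u a + 1 = T.dist u v) : par T u v = a := by
  have hv : 0 < T.dist u v := by omega
  obtain ⟨hadj, hd⟩ := par_spec hT.1 hv
  exact parent_unique hT hadj hd h1 ha

lemma depth_zero {T : SimpleGraph α} (hc : T.Connected) {u v : α} (h : T.dist u v = 0) :
    v = u := ((hc.dist_eq_zero_iff).mp h).symm

lemma par_iter_depth {T : SimpleGraph α} (hT : T.IsTree) (u x : α) :
    ∀ k, k ≤ T.dist u x → T.dist u ((par T u)^[k] x) = T.dist u x - k := by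
  intro k
  induction k with
  | zero => simp
  | succ k ih =>
    intro hk
    have hy := ih (by omega)
    have hpos : 0 < T.dist u ((par T u)^[k] x) := by omega
    rw [Function.iterate_succ_apply']
    have := (par_spec hT.1 hpos).2
    omega

lemma par_iter_adj {T : SimpleGraph α} (hT : T.IsTree) (u x : α) (k : ℕ)
    (hk : k + 1 ≤ T.dist u x) :
    T.Adj ((par T u)^[k+1] x) ((par T u)^[k] x) := by
  have hpos : 0 < T.dist u ((par T u)^[k] x) := by
    have := par_iter_depth hT u x k (by omega)
    omega
  rw [Function.iterate_succ_apply']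
  exact (par_spec hT.1 hpos).1

end S8

namespace S8

open SimpleGraph

variable {α : Type} [Fintype α] [DecidableEq α]

noncomputable def leafPatt (ρ : ℕ) (G T : SimpleGraph α) (u x : α) :
    Fin (ρ + 1) → Fin (ρ + 1) → Bool :=
  letI := Classical.propDecidable
  fun i j => decide (G.Adj ((par T u)^[(i : ℕ)] x) ((par T u)^[(j : ℕ)] x))

noncomputable def valid (ρ : ℕ) : Finset (Fin (ρ + 1) → Fin (ρ + 1) → Bool) := by
  classical
  exact Finset.univ.filter (fun p => (∀ i, p i i = false) ∧ (∀ i j, p i j = p j i))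

lemma mem_valid {ρ : ℕ} (p : Fin (ρ + 1) → Fin (ρ + 1) → Bool) :
    p ∈ valid ρ ↔ (∀ i, p i i = false) ∧ (∀ i j, p i j = p j i) := by
  classical
  simp [valid]

lemma leafPatt_mem_valid {ρ : ℕ} {G T : SimpleGraph α} {u x : α} :
    leafPatt ρ G T u x ∈ valid ρ := by
  rw [mem_valid]
  constructor
  · intro i
    simp [leafPatt]
  · intro i j
    simp only [leafPatt]
    apply decide_eq_decide.mpr
    constructor <;> exact fun h => h.symm

lemma valid_nonempty (ρ : ℕ) : (valid ρ).Nonempty := by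
  refine ⟨fun _ _ => false, ?_⟩
  rw [mem_valid]
  exact ⟨fun _ => rfl, fun _ _ => rfl⟩

lemma valid_card (ρ : ℕ) : (valid ρ).card ≤ 2 ^ (ρ ^ 2) := by
  classical
  have h1 : (valid ρ).card ≤ (Finset.univ : Finset (Fin ρ × Fin ρ → Bool)).card := by
    apply Finset.card_le_card_of_injOn
      (fun p => fun ab : Fin ρ × Fin ρ => p ab.1.castSucc ab.2.succ)
      (fun _ _ => Finset.mem_univ _)
    intro p hp q hq hpq
    rw [Finset.mem_coe, mem_valid] at hp hq
    have key : ∀ i j : Fin (ρ + 1), (i : ℕ) < (j : ℕ) → p i j = q i j := by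
      intro i j hij
      have hi : (i : ℕ) < ρ := by omega
      have hj : 0 < (j : ℕ) := by omega
      have hj' : (j : ℕ) - 1 < ρ := by omega
      have := congrFun hpq (⟨(i : ℕ), hi⟩, ⟨(j : ℕ) - 1, hj'⟩)
      simp only at this
      have hci : (⟨(i : ℕ), hi⟩ : Fin ρ).castSucc = i := by
        apply Fin.ext; simp
      have hcj : (⟨(j : ℕ) - 1, hj'⟩ : Fin ρ).succ = j := by
        apply Fin.ext; simp; omega
      rwa [hci, hcj] at this
    funext i j
    rcases lt_trichotomy (i : ℕ) (j : ℕ) with h | h | h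
    · exact key i j h
    · have : i = j := Fin.ext h
      subst this
      rw [hp.1, hq.1]
    · rw [hp.2, hq.2]
      exact key j i h
  have h2 : (Finset.univ : Finset (Fin ρ × Fin ρ → Bool)).card = 2 ^ (ρ * ρ) := by
    rw [Finset.card_univ, Fintype.card_fun]
    simp
  calc (valid ρ).card ≤ 2 ^ (ρ * ρ) := h2 ▸ h1
    _ = 2 ^ (ρ ^ 2) := by rw [pow_two]

noncomputable def childF (T : SimpleGraph α) (u v : α) : Finset α :=
  (Set.toFinite {w | IsChild T u v w}).toFinset

lemma mem_childF {T : SimpleGraph α} {u v w : α} :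
    w ∈ childF T u v ↔ IsChild T u v w := by
  simp [childF]

noncomputable def pick (δ ρ : ℕ) (G T : SimpleGraph α) (u : α) :
    ℕ → α → Finset α × (Fin (ρ + 1) → Fin (ρ + 1) → Bool)
  | 0, v => ({v}, leafPatt ρ G T u v)
  | (h + 1), v =>
    if hx : ∃ p ∈ valid ρ,
        δ ≤ ((childF T u v).filter fun w => (pick δ ρ G T u h w).2 = p).card then
      (insert v ((Finset.exists_subset_card_eq hx.choose_spec.2).choose.biUnion
        fun c => (pick δ ρ G T u h c).1), hx.choose)
    else (∅, leafPatt ρ G T u v)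

lemma pick_valid (δ ρ : ℕ) (G T : SimpleGraph α) (u : α) :
    ∀ h v, (pick δ ρ G T u h v).2 ∈ valid ρ := by
  intro h v
  cases h with
  | zero => exact leafPatt_mem_valid
  | succ h =>
    rw [pick]
    split
    · next hx => exact hx.choose_spec.1
    · exact leafPatt_mem_valid

end S8

namespace S8

set_option linter.unusedSectionVars false
set_option maxHeartbeats 1000000

open SimpleGraph

variable {α : Type} [Fintype α] [DecidableEq α]

lemma pick_spec {δ ρ : ℕ} {G T : SimpleGraph α} {u : α} (hT : T.IsTree)
    (hreg : RootedRegular T u (δ * 2 ^ (ρ ^ 2)) ρ) :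
    ∀ h v, T.dist u v + h = ρ →
      v ∈ (pick δ ρ G T u h v).1 ∧
      (∀ x ∈ (pick δ ρ G T u h v).1, T.dist u v ≤ T.dist u x ∧ T.dist u x ≤ ρ ∧
        (par T u)^[T.dist u x - T.dist u v] x = v) ∧
      (∀ x ∈ (pick δ ρ G T u h v).1, x ≠ v → par T u x ∈ (pick δ ρ G T u h v).1) ∧
      (∀ x ∈ (pick δ ρ G T u h v).1, T.dist u x < ρ →
        {w | w ∈ (pick δ ρ G T u h v).1 ∧ T.Adj x w ∧
          T.dist u w = T.dist u x + 1}.ncard = δ) ∧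
      (∀ x ∈ (pick δ ρ G T u h v).1, T.dist u x = ρ →
        leafPatt ρ G T u x = (pick δ ρ G T u h v).2) := by
  classical
  intro h
  induction h with
  | zero =>
    intro v hv
    refine ⟨by simp [pick], ?_, ?_, ?_, ?_⟩
    · intro x hx
      simp only [pick, Finset.mem_singleton] at hx
      subst hx
      exact ⟨le_rfl, by omega, by simp⟩
    · intro x hx hxv
      simp only [pick, Finset.mem_singleton] at hx
      exact absurd hx hxv
    · intro x hx hxρ
      simp only [pick, Finset.mem_singleton] at hx
      subst hx
      exact absurd hxρ (by omega)
    · intro x hx _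
      simp only [pick, Finset.mem_singleton] at hx
      subst hx
      simp [pick]
  | succ h IH =>
    intro v hv
    have hvρ : T.dist u v < ρ := by omega
    have hchild : (childF T u v).card = δ * 2 ^ (ρ ^ 2) := by
      have h2 := hreg.2.2 v hvρ
      rw [Set.ncard_eq_toFinset_card _ (Set.toFinite _)] at h2
      exact h2
    have hmul : (valid ρ).card * δ ≤ (childF T u v).card := by
      rw [hchild]
      calc (valid ρ).card * δ ≤ 2 ^ (ρ ^ 2) * δ := Nat.mul_le_mul_right δ (valid_card ρ)
        _ = δ * 2 ^ (ρ ^ 2) := Nat.mul_comm _ _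
    have hx : ∃ p ∈ valid ρ,
        δ ≤ ((childF T u v).filter fun w => (pick δ ρ G T u h w).2 = p).card := by
      obtain ⟨p, hp, hcard⟩ := Finset.exists_le_card_fiber_of_mul_le_card_of_maps_to
        (f := fun w => (pick δ ρ G T u h w).2) (t := valid ρ) (s := childF T u v) (n := δ)
        (fun w _ => pick_valid δ ρ G T u h w) (valid_nonempty ρ) hmul
      exact ⟨p, hp, hcard⟩
    have hpick : pick δ ρ G T u (h + 1) v =
        (insert v ((Finset.exists_subset_card_eq hx.choose_spec.2).choose.biUnion
          fun c => (pick δ ρ G T u h c).1), hx.choose) := by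
      rw [pick, dif_pos hx]
    set p := hx.choose with hpdef
    set D := (Finset.exists_subset_card_eq hx.choose_spec.2).choose with hDdef
    have hDsub : D ⊆ (childF T u v).filter fun w => (pick δ ρ G T u h w).2 = p :=
      (Finset.exists_subset_card_eq hx.choose_spec.2).choose_spec.1
    have hDcard : D.card = δ :=
      (Finset.exists_subset_card_eq hx.choose_spec.2).choose_spec.2
    have hcD : ∀ c ∈ D, (T.Adj v c ∧ T.dist u c = T.dist u v + 1) ∧
        (pick δ ρ G T u h c).2 = p := by
      intro c hc
      have h3 := hDsub hc
      rw [Finset.mem_filter, mem_childF] at h3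
      exact ⟨h3.1, h3.2⟩
    have hIHc : ∀ c ∈ D, T.dist u c + h = ρ := by
      intro c hc
      have := (hcD c hc).1.2
      omega
    have hparc : ∀ c ∈ D, par T u c = v := by
      intro c hc
      exact par_eq hT (hcD c hc).1.1 (by have := (hcD c hc).1.2; omega)
    have hmem : ∀ x, x ∈ (pick δ ρ G T u (h + 1) v).1 ↔
        x = v ∨ ∃ c ∈ D, x ∈ (pick δ ρ G T u h c).1 := by
      intro x
      rw [hpick]
      simp
    refine ⟨(hmem v).mpr (Or.inl rfl), ?_, ?_, ?_, ?_⟩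
    · -- (b)
      intro x hxm
      rcases (hmem x).mp hxm with rfl | ⟨c, hc, hxc⟩
      · exact ⟨le_rfl, by omega, by simp⟩
      · obtain ⟨hge, hle, hpar⟩ := (IH c (hIHc c hc)).2.1 x hxc
        have hdc := (hcD c hc).1.2
        refine ⟨by omega, hle, ?_⟩
        have hs : T.dist u x - T.dist u v = (T.dist u x - T.dist u c) + 1 := by omega
        rw [hs, Function.iterate_succ_apply', hpar, hparc c hc]
    · -- (c)
      intro x hxm hxv
      rcases (hmem x).mp hxm with rfl | ⟨c, hc, hxc⟩
      · exact absurd rfl hxv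
      · by_cases hxc' : x = c
        · subst hxc'
          rw [hparc x hc]
          exact (hmem v).mpr (Or.inl rfl)
        · exact (hmem _).mpr (Or.inr ⟨c, hc, (IH c (hIHc c hc)).2.2.1 x hxc hxc'⟩)
    · -- (d)
      intro x hxm hxρ
      rcases (hmem x).mp hxm with rfl | ⟨c₀, hc₀, hxc₀⟩
      · have hset : {w | w ∈ (pick δ ρ G T u (h + 1) x).1 ∧ T.Adj x w ∧
            T.dist u w = T.dist u x + 1} = ↑D := by
          ext w
          simp only [Set.mem_setOf_eq, Finset.coe_sort_coe, Finset.mem_coe]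
          constructor
          · rintro ⟨hw, hadj, hdw⟩
            rcases (hmem w).mp hw with rfl | ⟨c, hc, hwc⟩
            · omega
            · have hb := (IH c (hIHc c hc)).2.1 w hwc
              have hdc := (hcD c hc).1.2
              have hw0 : T.dist u w - T.dist u c = 0 := by omega
              have := hb.2.2
              rw [hw0] at this
              simp only [Function.iterate_zero_apply] at this
              subst this
              exact hc
          · intro hw
            exact ⟨(hmem w).mpr (Or.inr ⟨w, hw, (IH w (hIHc w hw)).1⟩),
              (hcD w hw).1.1, (hcD w hw).1.2⟩
        rw [hset, Set.ncard_coe_finset, hDcard]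
      · have hdc₀ := (hcD c₀ hc₀).1.2
        have hbx := (IH c₀ (hIHc c₀ hc₀)).2.1 x hxc₀
        have hset : {w | w ∈ (pick δ ρ G T u (h + 1) v).1 ∧ T.Adj x w ∧
            T.dist u w = T.dist u x + 1} =
            {w | w ∈ (pick δ ρ G T u h c₀).1 ∧ T.Adj x w ∧
            T.dist u w = T.dist u x + 1} := by
          ext w
          simp only [Set.mem_setOf_eq]
          constructor
          · rintro ⟨hw, hadj, hdw⟩
            rcases (hmem w).mp hw with rfl | ⟨c', hc', hwc'⟩
            · omega
            · have hb' := (IH c' (hIHc c' hc')).2.1 w hwc'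
              have hdc' := (hcD c' hc').1.2
              have hparw : par T u w = x := par_eq hT hadj (by omega)
              have hk : T.dist u w - T.dist u c' = (T.dist u x - T.dist u c₀) + 1 := by
                omega
              have h5 := hb'.2.2
              rw [hk, Function.iterate_succ_apply, hparw] at h5
              have h6 := hbx.2.2
              have : c' = c₀ := by rw [← h5, h6]
              subst this
              exact ⟨hwc', hadj, hdw⟩
          · rintro ⟨hw, hadj, hdw⟩
            exact ⟨(hmem w).mpr (Or.inr ⟨c₀, hc₀, hw⟩), hadj, hdw⟩
        rw [hset]
        exact (IH c₀ (hIHc c₀ hc₀)).2.2.2.1 x hxc₀ hxρ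
    · -- (e)
      intro x hxm hxρ
      rcases (hmem x).mp hxm with rfl | ⟨c, hc, hxc⟩
      · omega
      · have h5 := (IH c (hIHc c hc)).2.2.2.2 x hxc hxρ
        rw [h5, (hcD c hc).2, hpick]

end S8

namespace S8

set_option linter.unusedSectionVars false
set_option maxHeartbeats 1600000

open SimpleGraph

variable {α : Type} [Fintype α] [DecidableEq α]

lemma isChild_iff {T : SimpleGraph α} {u v w : α} :
    IsChild T u v w ↔ T.Adj v w ∧ T.dist u w = T.dist u v + 1 := Iff.rfl

lemma assemble {δ ρ : ℕ} {G T : SimpleGraph α} {u : α} (hT : T.IsTree)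
    (sF : Finset α) (pt : Fin (ρ + 1) → Fin (ρ + 1) → Bool)
    (husF : u ∈ sF)
    (hB : ∀ x ∈ sF, T.dist u x ≤ ρ)
    (hBp : ∀ x ∈ sF, (par T u)^[T.dist u x] x = u)
    (hC : ∀ x ∈ sF, x ≠ u → par T u x ∈ sF)
    (hD : ∀ x ∈ sF, T.dist u x < ρ →
      {w | w ∈ sF ∧ T.Adj x w ∧ T.dist u w = T.dist u x + 1}.ncard = δ)
    (hE : ∀ x ∈ sF, T.dist u x = ρ → leafPatt ρ G T u x = pt) :
    ∃ (hu : u ∈ (↑sF : Set α)),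
      IsRootedSubtree T u ↑sF ⟨u, hu⟩ ∧
      RootedRegular (T.induce ↑sF) ⟨u, hu⟩ δ ρ ∧
      PathUniform G (fun v : ↥(↑sF : Set α) => (v : α)) (T.induce ↑sF) ⟨u, hu⟩ ρ := by
  classical
  have hus : u ∈ (↑sF : Set α) := Finset.mem_coe.mpr husF
  -- closure under iterated parents
  have chain_mem : ∀ (k : ℕ) (x : α), x ∈ sF → (par T u)^[k] x ∈ sF := by
    intro k
    induction k with
    | zero => intro x hx; simpa using hx
    | succ k ih =>
      intro x hx
      rw [Function.iterate_succ_apply']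
      by_cases hyu : (par T u)^[k] x = u
      · rw [hyu, par_root]; exact husF
      · exact hC _ (ih x hx) hyu
  -- walks along parent chains in the induced graph
  have chain_walk : ∀ (k : ℕ) (a x : ↥(↑sF : Set α)), (par T u)^[k] ↑x = ↑a →
      k ≤ T.dist u ↑x → ∃ w : (T.induce ↑sF).Walk a x, w.length = k := by
    intro k
    induction k with
    | zero =>
      intro a x ha _
      have : a = x := Subtype.ext (by simpa using ha.symm)
      subst this
      exact ⟨SimpleGraph.Walk.nil, rfl⟩
    | succ k ih =>
      intro a x ha hk
      have hymem : (par T u)^[k] ↑x ∈ sF :=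
        chain_mem k ↑x (Finset.mem_coe.mp x.2)
      obtain ⟨w, hw⟩ := ih ⟨(par T u)^[k] ↑x, Finset.mem_coe.mpr hymem⟩ x rfl (by omega)
      have hadj : T.Adj ((par T u)^[k+1] ↑x) ((par T u)^[k] ↑x) := par_iter_adj hT u ↑x k hk
      have hadj' : (T.induce ↑sF).Adj a ⟨(par T u)^[k] ↑x, Finset.mem_coe.mpr hymem⟩ := by
        show T.Adj ↑a _
        rw [← ha]
        exact hadj
      exact ⟨SimpleGraph.Walk.cons hadj' w, by simp [hw]⟩
  have hreach : ∀ x : ↥(↑sF : Set α), (T.induce ↑sF).Reachable ⟨u, hus⟩ x := by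
    intro x
    obtain ⟨w, -⟩ := chain_walk (T.dist u ↑x) ⟨u, hus⟩ x
      (hBp ↑x (Finset.mem_coe.mp x.2)) le_rfl
    exact ⟨w⟩
  have hconnI : (T.induce ↑sF).Connected := by
    haveI : Nonempty ↥(↑sF : Set α) := ⟨⟨u, hus⟩⟩
    exact ⟨fun a b => (hreach a).symm.trans (hreach b)⟩
  have hdistI : ∀ (a x : ↥(↑sF : Set α)) (k : ℕ), (par T u)^[k] ↑x = ↑a →
      k ≤ T.dist u ↑x → (T.induce ↑sF).dist a x = k := by
    intro a x k ha hk
    obtain ⟨w, hw⟩ := chain_walk k a x ha hk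
    refine le_antisymm (hw ▸ SimpleGraph.dist_le w) ?_
    obtain ⟨q, hq⟩ := (hconnI.exists_walk_length_eq_dist a x)
    have h1 : T.dist ↑a ↑x ≤ q.length := by
      have := SimpleGraph.dist_le (q.map (SimpleGraph.Embedding.induce (↑sF : Set α)).toHom)
      rwa [SimpleGraph.Walk.length_map] at this
    have h4 : T.dist u ↑a = T.dist u ↑x - k := by
      rw [← ha]; exact par_iter_depth hT u ↑x k hk
    have h3 := hT.1.dist_triangle (u := u) (v := (↑a : α)) (w := (↑x : α))
    omega
  have hdistRoot : ∀ x : ↥(↑sF : Set α), (T.induce ↑sF).dist ⟨u, hus⟩ x = T.dist u ↑x :=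
    fun x => hdistI ⟨u, hus⟩ x (T.dist u ↑x) (hBp ↑x (Finset.mem_coe.mp x.2)) le_rfl
  have hacyc : (T.induce ↑sF).IsAcyclic := by
    intro v c hc
    exact hT.2 (c.map (SimpleGraph.Embedding.induce _).toHom)
      ((SimpleGraph.Walk.map_isCycle_iff_of_injective
        (SimpleGraph.Embedding.induce (G := T) (↑sF : Set α)).injective).mpr hc)
  have hItree : (T.induce ↑sF).IsTree := ⟨hconnI, hacyc⟩
  refine ⟨hus, ⟨hItree, ?_⟩, ⟨hItree, ?_, ?_⟩, ?_⟩
  · -- rooted subtree: children are preserved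
    intro v w hch
    rw [isChild_iff] at hch ⊢
    obtain ⟨hadj, hd⟩ := hch
    rw [hdistRoot, hdistRoot] at hd
    exact ⟨hadj, hd⟩
  · -- distance bound
    intro x
    rw [hdistRoot]
    exact hB ↑x (Finset.mem_coe.mp x.2)
  · -- degree condition
    intro x hx
    rw [hdistRoot] at hx
    have himg : Subtype.val '' {w : ↥(↑sF : Set α) | IsChild (T.induce ↑sF) ⟨u, hus⟩ x w} =
        {w | w ∈ sF ∧ T.Adj ↑x w ∧ T.dist u w = T.dist u ↑x + 1} := by
      ext w
      simp only [Set.mem_image, Set.mem_setOf_eq]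
      constructor
      · rintro ⟨w', hw', rfl⟩
        rw [isChild_iff] at hw'
        obtain ⟨hadj, hdw⟩ := hw'
        rw [hdistRoot, hdistRoot] at hdw
        exact ⟨Finset.mem_coe.mp w'.2, hadj, hdw⟩
      · rintro ⟨hwm, hadj, hdw⟩
        refine ⟨⟨w, Finset.mem_coe.mpr hwm⟩, ?_, rfl⟩
        show IsChild _ _ _ _
        rw [isChild_iff]
        refine ⟨hadj, ?_⟩
        rw [hdistRoot, hdistRoot]
        exact hdw
    rw [← Set.ncard_image_of_injective _ Subtype.val_injective, himg]
    exact hD ↑x (Finset.mem_coe.mp x.2) hx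
  · -- path uniformity
    have anc_unique : ∀ i, i ≤ ρ → ∀ (x w : ↥(↑sF : Set α)), T.dist u ↑x = ρ →
        (T.induce ↑sF).dist ⟨u, hus⟩ w + i = ρ → (T.induce ↑sF).dist w x = i →
        (w : α) = (par T u)^[i] ↑x := by
      intro i
      induction i with
      | zero =>
        intro _ x w hx hw h0
        have : w = x := (hconnI.dist_eq_zero_iff).mp h0
        subst this
        simp
      | succ i ih =>
        intro hi x w hx hw hd
        obtain ⟨q, hq⟩ := hconnI.exists_walk_length_eq_dist w x
        have hwx : w ≠ x := by
          intro h
          subst h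
          rw [SimpleGraph.dist_self] at hd
          omega
        obtain ⟨y, hadj, r, hqr⟩ := SimpleGraph.Walk.exists_eq_cons_of_ne hwx q
        have hr : r.length = i := by
          rw [hqr] at hq
          simp only [SimpleGraph.Walk.length_cons] at hq
          omega
        have hyx_le : (T.induce ↑sF).dist y x ≤ i := hr ▸ SimpleGraph.dist_le r
        have hwy : (T.induce ↑sF).dist w y ≤ 1 := SimpleGraph.dist_le hadj.toWalk
        have ht1 := hconnI.dist_triangle (u := w) (v := y) (w := x)
        have hyx : (T.induce ↑sF).dist y x = i := by omega
        have ht2 := hconnI.dist_triangle (u := ⟨u, hus⟩) (v := w) (w := y)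
        have ht3 := hconnI.dist_triangle (u := ⟨u, hus⟩) (v := y) (w := x)
        have hrx : (T.induce ↑sF).dist ⟨u, hus⟩ x = ρ := by rw [hdistRoot]; exact hx
        have hy : (T.induce ↑sF).dist ⟨u, hus⟩ y + i = ρ := by omega
        have hyp := ih (by omega) x y hx hy hyx
        have hadjT : T.Adj ↑w ↑y := hadj
        have hdy : T.dist u ↑y = ρ - i := by
          rw [← hdistRoot]; omega
        have hdw : T.dist u ↑w = ρ - i - 1 := by
          rw [← hdistRoot]; omega
        have hpos : 0 < T.dist u ↑y := by omega
        have hps := par_spec hT.1 hpos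
        have hweq : (w : α) = par T u ↑y :=
          parent_unique hT hadjT (by omega) hps.1 hps.2
        rw [hweq, hyp]
        exact (Function.iterate_succ_apply' (par T u) i ↑x).symm
    have anc_eq : ∀ (x : ↥(↑sF : Set α)), T.dist u ↑x = ρ → ∀ i, i ≤ ρ →
        ((ancestor (T.induce ↑sF) ⟨u, hus⟩ x i : ↥(↑sF : Set α)) : α) = (par T u)^[i] ↑x := by
      intro x hxd i hi
      have hmemi : (par T u)^[i] ↑x ∈ sF := chain_mem i ↑x (Finset.mem_coe.mp x.2)
      have hex : ∃ w : ↥(↑sF : Set α),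
          (T.induce ↑sF).dist ⟨u, hus⟩ w + i = (T.induce ↑sF).dist ⟨u, hus⟩ x ∧
          (T.induce ↑sF).dist w x = i := by
        refine ⟨⟨(par T u)^[i] ↑x, Finset.mem_coe.mpr hmemi⟩, ?_, ?_⟩
        · rw [hdistRoot, hdistRoot]
          have := par_iter_depth hT u ↑x i (by omega)
          simp only [Subtype.coe_mk]
          omega
        · exact hdistI _ x i rfl (by omega)
      have hanc : ancestor (T.induce ↑sF) ⟨u, hus⟩ x i = hex.choose := dif_pos hex
      rw [hanc]
      obtain ⟨h1, h2⟩ := hex.choose_spec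
      refine anc_unique i hi x hex.choose hxd ?_ h2
      have hrx : (T.induce ↑sF).dist ⟨u, hus⟩ x = ρ := by rw [hdistRoot]; exact hxd
      omega
    intro v v' hv hv' i j hi hj
    have hxd : T.dist u ↑v = ρ := by rw [← hdistRoot]; exact hv
    have hxd' : T.dist u ↑v' = ρ := by rw [← hdistRoot]; exact hv'
    show G.Adj ↑(ancestor (T.induce ↑sF) ⟨u, hus⟩ v i) ↑(ancestor (T.induce ↑sF) ⟨u, hus⟩ v j)
      ↔ G.Adj ↑(ancestor (T.induce ↑sF) ⟨u, hus⟩ v' i) ↑(ancestor (T.induce ↑sF) ⟨u, hus⟩ v' j)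
    rw [anc_eq v hxd i hi, anc_eq v hxd j hj, anc_eq v' hxd' i hi, anc_eq v' hxd' j hj]
    have hp1 := hE ↑v (Finset.mem_coe.mp v.2) hxd
    have hp2 := hE ↑v' (Finset.mem_coe.mp v'.2) hxd'
    have hcf := congrFun (congrFun (hp1.trans hp2.symm) ⟨i, by omega⟩) ⟨j, by omega⟩
    simp only [leafPatt] at hcf
    exact decide_eq_decide.mp hcf

end S8
/-- Every `(δ·2^{ρ²}, ρ)`-regular rooted tree that is a subgraph of `G` has a
`(δ, ρ)`-regular rooted subtree (with the same root) that is path-uniform in `G`. -/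
theorem statement8 {α : Type} [Fintype α] (δ ρ : ℕ) (hδ : 1 ≤ δ)
    (G T : SimpleGraph α) (u : α) (hsub : T ≤ G)
    (hreg : RootedRegular T u (δ * 2 ^ (ρ ^ 2)) ρ) :
    ∃ (s : Set α) (hu : u ∈ s),
      IsRootedSubtree T u s ⟨u, hu⟩ ∧
      RootedRegular (T.induce s) ⟨u, hu⟩ δ ρ ∧
      PathUniform G (fun v : ↥s => (v : α)) (T.induce s) ⟨u, hu⟩ ρ := by
  classical
  have hT : T.IsTree := hreg.1
  have hu0 : T.dist u u = 0 := by simp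
  obtain ⟨husF, hB, hC, hD, hE⟩ :=
    S8.pick_spec (G := G) (δ := δ) hT hreg ρ u (by simp)
  obtain ⟨hu, h1, h2, h3⟩ := S8.assemble hT (S8.pick δ ρ G T u ρ u).1
    (S8.pick δ ρ G T u ρ u).2 husF
    (fun x hx => (hB x hx).2.1)
    (fun x hx => by have := (hB x hx).2.2; rwa [hu0, Nat.sub_zero] at this)
    hC hD hE
  exact ⟨_, hu, h1, h2, h3⟩
end

section
/- Let σ ∈ ℕ⁺, let G be a graph with no induced minor isomorphic to K_{σ,σ}, and let X ⊆ V(G). Then there is no (σ,4σ)-X-abyss in G. -/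
private lemma dist_le_succ_of_adj {V : Type} (G : SimpleGraph V) {x u v : V}
    (hr : G.Reachable x u) (h : G.Adj u v) : G.dist x v ≤ G.dist x u + 1 := by
  obtain ⟨p, hp⟩ := hr.exists_walk_length_eq_dist
  calc G.dist x v ≤ (p.concat h).length := SimpleGraph.dist_le _
    _ = G.dist x u + 1 := by rw [SimpleGraph.Walk.length_concat, hp]

private lemma walk_ivt {V : Type} (G : SimpleGraph V) (x : V) :
    ∀ {u v : V} (w : G.Walk u v) (m : ℕ), G.Reachable x u → G.dist x u ≤ m →
      m ≤ G.dist x v → ∃ z ∈ w.support, G.dist x z = m := by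
  intro u v w
  induction w with
  | nil =>
    intro m _ h1 h2
    exact ⟨_, SimpleGraph.Walk.start_mem_support _, le_antisymm h1 h2⟩
  | @cons u u' v h p ih =>
    intro m hr h1 h2
    by_cases hm : G.dist x u = m
    · exact ⟨u, SimpleGraph.Walk.start_mem_support _, hm⟩
    · have hr' : G.Reachable x u' := hr.trans ⟨SimpleGraph.Walk.cons h SimpleGraph.Walk.nil⟩
      have hstep := dist_le_succ_of_adj G hr h
      have h1' : G.dist x u' ≤ m := by omega
      obtain ⟨z, hz, hzd⟩ := ih m hr' h1' h2
      exact ⟨z, by simp only [SimpleGraph.Walk.support_cons]; exact List.mem_cons_of_mem _ hz, hzd⟩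

private lemma walk_exists_cons {V : Type} {G : SimpleGraph V} {u v : V} (p : G.Walk u v)
    (h : 0 < p.length) :
    ∃ (z : V) (hadj : G.Adj u z) (q : G.Walk z v), p = SimpleGraph.Walk.cons hadj q := by
  cases p with
  | nil => simp at h
  | cons hadj q => exact ⟨_, hadj, q, rfl⟩

private lemma distIn_le' {V : Type} (G : SimpleGraph V) (Sset : Set V) {p q : V}
    (w : G.Walk p q) (hw : ∀ v ∈ w.support, v ∈ Sset) : distIn G Sset p q ≤ w.length :=
  Nat.sInf_le ⟨w, rfl, hw⟩

private lemma distIn_exists_walk {V : Type} (G : SimpleGraph V) (Sset : Set V) {p q : V} {n : ℕ}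
    (h : distIn G Sset p q = n + 1) :
    ∃ w : G.Walk p q, w.length = n + 1 ∧ ∀ v ∈ w.support, v ∈ Sset := by
  have hne : {m | ∃ w : G.Walk p q, w.length = m ∧ ∀ v ∈ w.support, v ∈ Sset}.Nonempty := by
    by_contra hc
    rw [Set.not_nonempty_iff_eq_empty] at hc
    have h0 : distIn G Sset p q = 0 := by unfold distIn; rw [hc]; exact Nat.sInf_empty
    omega
  have hmem := Nat.sInf_mem hne
  have heq : sInf {m | ∃ w : G.Walk p q, w.length = m ∧ ∀ v ∈ w.support, v ∈ Sset} = n + 1 := h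
  rw [heq] at hmem
  exact hmem

/-- If `G` has no induced minor isomorphic to `K_{σ,σ}`, then for every
`X ⊆ V(G)` there is no `(σ, 4σ)`-`X`-abyss in `G`. -/
theorem statement14 {V : Type} [Fintype V] (σ : ℕ) (hσ : 1 ≤ σ)
    (G : SimpleGraph V)
    (hK : ¬ InducedMinor (completeBipartiteGraph (Fin σ) (Fin σ)) G)
    (X : Set V) :
    ¬ ∃ a : ℕ → V, IsAbyss G X σ (4 * σ) a := by
  classical
  rintro ⟨a, S, ρ, hS0X, hS0conn, ha0, hstep, hdist⟩
  obtain ⟨n, rfl⟩ : ∃ n, σ = n + 1 := ⟨σ - 1, by omega⟩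
  set x := a (n + 1) with hxdef
  set y := a (n + 1 + 1) with hydef
  -- basic extraction
  have hsub : ∀ i, i < n + 1 → ∀ v ∈ S (i + 1),
      v ∈ S i ∧ distIn G (S i) (a i) v = ρ i + 1 := by
    intro i hi v hv
    exact (hstep i hi).1 hv
  have hconn : ∀ i, i < n + 1 → ConnectedIn G (S (i + 1)) := fun i hi => (hstep i hi).2.1
  have hmem : ∀ i, i < n + 1 → ∀ k, i + 1 ≤ k → k ≤ n + 1 + 1 → a k ∈ S (i + 1) :=
    fun i hi => (hstep i hi).2.2
  -- nesting
  have hmono : ∀ j, j ≤ n + 1 → ∀ i, i ≤ j → S j ⊆ S i := by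
    intro j
    induction j with
    | zero =>
      intro _ i hi
      have : i = 0 := by omega
      subst this
      exact fun v hv => hv
    | succ m ih =>
      intro hm i hi
      rcases Nat.lt_or_ge i (m + 1) with hlt | hge
      · intro v hv
        have hvm : v ∈ S m := (hsub m (by omega) v hv).1
        exact ih (by omega) i (by omega) hvm
      · have : i = m + 1 := by omega
        subst this
        exact fun v hv => hv
  have hxS : x ∈ S (n + 1) := hmem n (by omega) (n + 1) (by omega) (by omega)
  have hyS : y ∈ S (n + 1) := hmem n (by omega) (n + 1 + 1) (by omega) (by omega)
  have hbS : ∀ v, v ∈ S (n + 1) → ∀ i, i < n + 1 →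
      v ∈ S i ∧ distIn G (S i) (a i) v = ρ i + 1 := by
    intro v hv i hi
    have hv' : v ∈ S (i + 1) := hmono (n + 1) (le_refl _) (i + 1) (by omega) hv
    exact hsub i hi v hv'
  have hdxy : 4 * (n + 1) ≤ G.dist x y := hdist
  have haSi : ∀ i, i < n + 1 → a i ∈ S i := by
    intro i hi
    cases i with
    | zero => exact ha0 0 (by omega)
    | succ m => exact hmem m (by omega) (m + 1) (le_refl _) (by omega)
  -- depth of each level
  have hρ : ∀ i, i < n + 1 → 1 ≤ ρ i := by
    intro i hi
    obtain ⟨wx, hwxl, hwxs⟩ := distIn_exists_walk G (S i) (hbS x hxS i hi).2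
    obtain ⟨wy, hwyl, hwys⟩ := distIn_exists_walk G (S i) (hbS y hyS i hi).2
    have hd := SimpleGraph.dist_le (wx.reverse.append wy)
    rw [SimpleGraph.Walk.length_append, SimpleGraph.Walk.length_reverse, hwxl, hwyl] at hd
    omega
  -- a walk from x to y inside S (n+1)
  obtain ⟨W, hWs⟩ := (hconn n (by omega)).2 x hxS y hyS
  -- choice of the b's
  have hbex : ∀ k : ℕ, ∃ v : V, k < n + 1 →
      v ∈ S (n + 1) ∧ G.dist x v = 4 * k + 2 ∧ G.Reachable x v := by
    intro k
    by_cases hk : k < n + 1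
    · obtain ⟨z, hzW, hzd⟩ := walk_ivt G x W (4 * k + 2) (SimpleGraph.Reachable.refl x)
        (by rw [SimpleGraph.dist_self]; omega)
        (le_trans (by omega) hdxy)
      exact ⟨z, fun _ => ⟨hWs z hzW, hzd, (W.takeUntil z hzW).reachable⟩⟩
    · exact ⟨x, fun h => absurd h hk⟩
  choose b hb using hbex
  -- choice of the z's (tips) and u's (their predecessors in the deep ball)
  have hzuex : ∀ i k : ℕ, ∃ z u : V, i < n + 1 → k < n + 1 →
      G.Adj z (b k) ∧ G.Adj u z ∧
      (∃ w : G.Walk (a i) z, w.length = ρ i ∧ ∀ q ∈ w.support, q ∈ S i) ∧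
      (∃ w : G.Walk (a i) u, w.length + 1 ≤ ρ i ∧ ∀ q ∈ w.support, q ∈ S i) := by
    intro i k
    by_cases hik : i < n + 1 ∧ k < n + 1
    · obtain ⟨hi, hk⟩ := hik
      obtain ⟨hbkS, hbkd, hbkr⟩ := hb k hk
      obtain ⟨w, hwl, hws⟩ := distIn_exists_walk G (S i) (hbS (b k) hbkS i hi).2
      have hrl : w.reverse.length = ρ i + 1 := by
        rw [SimpleGraph.Walk.length_reverse, hwl]
      obtain ⟨z, h1, r1, hr1⟩ := walk_exists_cons w.reverse (by omega)
      have hr1l : r1.length = ρ i := by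
        have := hrl
        rw [hr1] at this
        simpa using this
      obtain ⟨u, h2, r2, hr2⟩ := walk_exists_cons r1 (by rw [hr1l]; exact hρ i hi)
      have hr2l : r2.length + 1 = ρ i := by
        rw [hr2] at hr1l
        simpa using hr1l
      have hsupr1 : ∀ q ∈ r1.support, q ∈ S i := by
        intro q hq
        apply hws
        have hq' : q ∈ w.reverse.support := by
          rw [hr1]
          simp only [SimpleGraph.Walk.support_cons]
          exact List.mem_cons_of_mem _ hq
        rwa [SimpleGraph.Walk.support_reverse, List.mem_reverse] at hq'
      have hsupr2 : ∀ q ∈ r2.support, q ∈ S i := by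
        intro q hq
        apply hsupr1
        rw [hr2]
        simp only [SimpleGraph.Walk.support_cons]
        exact List.mem_cons_of_mem _ hq
      refine ⟨z, u, fun _ _ => ⟨h1.symm, h2.symm, ⟨r1.reverse, ?_, ?_⟩, ⟨r2.reverse, ?_, ?_⟩⟩⟩
      · rw [SimpleGraph.Walk.length_reverse, hr1l]
      · intro q hq
        rw [SimpleGraph.Walk.support_reverse, List.mem_reverse] at hq
        exact hsupr1 q hq
      · rw [SimpleGraph.Walk.length_reverse]; omega
      · intro q hq
        rw [SimpleGraph.Walk.support_reverse, List.mem_reverse] at hq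
        exact hsupr2 q hq
    · exact ⟨x, x, fun h1 h2 => absurd ⟨h1, h2⟩ hik⟩
  choose z u hzu using hzuex
  -- the branch sets
  set A : ℕ → Set V := fun i =>
    {v | ∃ w : G.Walk (a i) v, w.length + 1 ≤ ρ i ∧ ∀ q ∈ w.support, q ∈ S i} with hAdef
  set B : ℕ → Set V := fun k =>
    insert (b k) {v | ∃ i, i < n + 1 ∧ v = z i k} with hBdef
  have hmemA : ∀ i v, v ∈ A i ↔
      ∃ w : G.Walk (a i) v, w.length + 1 ≤ ρ i ∧ ∀ q ∈ w.support, q ∈ S i := by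
    intro i v
    rw [hAdef]
    exact Iff.rfl
  have hmemB : ∀ k v, v ∈ B k ↔ v = b k ∨ ∃ i, i < n + 1 ∧ v = z i k := by
    intro k v; rw [hBdef]; simp [Set.mem_insert_iff]
  have hA_S : ∀ i v, v ∈ A i → v ∈ S i := by
    intro i v hv
    obtain ⟨w, _, hs⟩ := (hmemA i v).1 hv
    exact hs v w.end_mem_support
  have hA_not : ∀ i, i < n + 1 → ∀ v, distIn G (S i) (a i) v = ρ i + 1 → v ∉ A i := by
    intro i hi v hdv hv
    obtain ⟨w, hl, hs⟩ := (hmemA i v).1 hv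
    have := distIn_le' G (S i) w hs
    omega
  have hzS : ∀ i k, i < n + 1 → k < n + 1 → z i k ∈ S i := by
    intro i k hi hk
    obtain ⟨w, _, hws⟩ := (hzu i k hi hk).2.2.1
    exact hws _ w.end_mem_support
  have hz_not_upper : ∀ i k, i < n + 1 → k < n + 1 → z i k ∉ S (i + 1) := by
    intro i k hi hk hmem'
    have hd := (hsub i hi _ hmem').2
    obtain ⟨w, hwl, hws⟩ := (hzu i k hi hk).2.2.1
    have := distIn_le' G (S i) w hws
    omega
  -- distance windows for the B's
  have hπ : ∀ k, k < n + 1 → ∀ v ∈ B k,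
      (4 * k + 1 ≤ G.dist x v ∧ G.dist x v ≤ 4 * k + 3) ∧ G.Reachable x v := by
    intro k hk v hv
    obtain ⟨hbkS, hbkd, hbkr⟩ := hb k hk
    rcases (hmemB k v).1 hv with rfl | ⟨i, hi, rfl⟩
    · exact ⟨⟨by omega, by omega⟩, hbkr⟩
    · have hadj := (hzu i k hi hk).1
      have hr : G.Reachable x (z i k) :=
        hbkr.trans ⟨SimpleGraph.Walk.cons hadj.symm SimpleGraph.Walk.nil⟩
      have h1 : G.dist x (z i k) ≤ G.dist x (b k) + 1 := dist_le_succ_of_adj G hbkr hadj.symm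
      have h2 : G.dist x (b k) ≤ G.dist x (z i k) + 1 := dist_le_succ_of_adj G hr hadj
      exact ⟨⟨by omega, by omega⟩, hr⟩
  -- A vs A (ordered)
  have hAA : ∀ i j, i < j → j < n + 1 → ∀ p ∈ A i, ∀ q ∈ A j, p ≠ q ∧ ¬ G.Adj p q := by
    intro i j hij hj p hp q hq
    have hqSj : q ∈ S j := hA_S j q hq
    have hqSi1 : q ∈ S (i + 1) := hmono j (by omega) (i + 1) (by omega) hqSj
    have hqd := (hsub i (by omega) q hqSi1).2
    have hqSi : q ∈ S i := (hsub i (by omega) q hqSi1).1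
    obtain ⟨w, hwl, hws⟩ := (hmemA i p).1 hp
    constructor
    · rintro rfl
      have := distIn_le' G (S i) w hws
      omega
    · intro hadj
      have hle := distIn_le' G (S i) (w.concat hadj) (by
        intro t ht
        rw [SimpleGraph.Walk.support_concat] at ht
        rw [List.mem_append, List.mem_singleton] at ht
        rcases ht with h | h
        · exact hws t h
        · subst h; exact hqSi)
      rw [SimpleGraph.Walk.length_concat] at hle
      omega
  -- B vs B (ordered)
  have hBB : ∀ k l, k < l → l < n + 1 → ∀ p ∈ B k, ∀ q ∈ B l, p ≠ q ∧ ¬ G.Adj p q := by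
    intro k l hkl hl p hp q hq
    obtain ⟨⟨hp1, hp2⟩, hpr⟩ := hπ k (by omega) p hp
    obtain ⟨⟨hq1, hq2⟩, _⟩ := hπ l hl q hq
    constructor
    · rintro rfl; omega
    · intro hadj
      have := dist_le_succ_of_adj G hpr hadj
      omega
  -- A vs B disjointness
  have hAB : ∀ i k, i < n + 1 → k < n + 1 → ∀ v ∈ A i, v ∉ B k := by
    intro i k hi hk v hv hvB
    rcases (hmemB k v).1 hvB with rfl | ⟨j, hj, rfl⟩
    · exact hA_not i hi _ (hbS (b k) (hb k hk).1 i hi).2 hv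
    · rcases lt_trichotomy i j with h | h | h
      · have hzSj : z j k ∈ S (i + 1) := hmono j (by omega) (i + 1) (by omega) (hzS j k hj hk)
        exact hA_not i hi _ (hsub i hi _ hzSj).2 hv
      · subst h
        obtain ⟨w, hwl, hws⟩ := (hmemA i _).1 hv
        have hbkSi : b k ∈ S i := (hbS (b k) (hb k hk).1 i hi).1
        have hadj := (hzu i k hi hk).1
        have hle := distIn_le' G (S i) (w.concat hadj) (by
          intro t ht
          rw [SimpleGraph.Walk.support_concat] at ht
          rw [List.mem_append, List.mem_singleton] at ht
          rcases ht with h | h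
          · exact hws t h
          · subst h; exact hbkSi)
        rw [SimpleGraph.Walk.length_concat] at hle
        have hd := (hbS (b k) (hb k hk).1 i hi).2
        omega
      · have hvS : z j k ∈ S i := hA_S i _ hv
        have : z j k ∈ S (j + 1) := hmono i (by omega) (j + 1) (by omega) hvS
        exact hz_not_upper j k hj hk this
  -- connectivity of the A's
  have hAconn : ∀ i, i < n + 1 → ConnectedIn G (A i) := by
    intro i hi
    have haiA : a i ∈ A i := by
      rw [hmemA]
      refine ⟨SimpleGraph.Walk.nil, by simpa using hρ i hi, ?_⟩
      intro q hq
      simp only [SimpleGraph.Walk.support_nil, List.mem_singleton] at hq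
      subst hq
      exact haSi i hi
    refine ⟨⟨a i, haiA⟩, ?_⟩
    intro p hp q hq
    obtain ⟨wp, hwpl, hwps⟩ := (hmemA i p).1 hp
    obtain ⟨wq, hwql, hwqs⟩ := (hmemA i q).1 hq
    refine ⟨wp.reverse.append wq, ?_⟩
    intro t ht
    have ht' : t ∈ wp.support ∨ t ∈ wq.support := by
      rw [SimpleGraph.Walk.mem_support_append_iff] at ht
      rcases ht with h | h
      · left; rwa [SimpleGraph.Walk.support_reverse, List.mem_reverse] at h
      · right; exact h
    rcases ht' with h | h
    · rw [hmemA]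
      refine ⟨wp.takeUntil t h, ?_, ?_⟩
      · have := SimpleGraph.Walk.length_takeUntil_le wp h
        omega
      · intro q' hq'
        exact hwps q' (SimpleGraph.Walk.support_takeUntil_subset wp h hq')
    · rw [hmemA]
      refine ⟨wq.takeUntil t h, ?_, ?_⟩
      · have := SimpleGraph.Walk.length_takeUntil_le wq h
        omega
      · intro q' hq'
        exact hwqs q' (SimpleGraph.Walk.support_takeUntil_subset wq h hq')
  -- connectivity of the B's
  have hBconn : ∀ k, k < n + 1 → ConnectedIn G (B k) := by
    intro k hk
    have hbkB : b k ∈ B k := (hmemB k _).2 (Or.inl rfl)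
    refine ⟨⟨b k, hbkB⟩, ?_⟩
    have key : ∀ p ∈ B k, ∃ w : G.Walk p (b k), ∀ t ∈ w.support, t ∈ B k := by
      intro p hp
      rcases (hmemB k p).1 hp with rfl | ⟨i, hi, rfl⟩
      · refine ⟨SimpleGraph.Walk.nil, ?_⟩
        intro t ht
        simp only [SimpleGraph.Walk.support_nil, List.mem_singleton] at ht
        subst ht
        exact hbkB
      · refine ⟨SimpleGraph.Walk.cons (hzu i k hi hk).1 SimpleGraph.Walk.nil, ?_⟩
        intro t ht
        simp only [SimpleGraph.Walk.support_cons, SimpleGraph.Walk.support_nil,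
          List.mem_cons, List.mem_singleton] at ht
        rcases ht with rfl | rfl | h
        · exact (hmemB k _).2 (Or.inr ⟨i, hi, rfl⟩)
        · exact hbkB
        · exact absurd h List.not_mem_nil
    intro p hp q hq
    obtain ⟨wp, hwp⟩ := key p hp
    obtain ⟨wq, hwq⟩ := key q hq
    refine ⟨wp.append wq.reverse, ?_⟩
    intro t ht
    rw [SimpleGraph.Walk.mem_support_append_iff] at ht
    rcases ht with h | h
    · exact hwp t h
    · rw [SimpleGraph.Walk.support_reverse, List.mem_reverse] at h
      exact hwq t h
  -- assemble the model
  apply hK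
  refine ⟨Sum.elim (fun i : Fin (n + 1) => A i.val) (fun k : Fin (n + 1) => B k.val),
    ?_, ?_, ?_, ?_⟩
  · rintro (i | k)
    · exact hAconn i.val i.isLt
    · exact hBconn k.val k.isLt
  · rintro (i | k) (j | l) hne
    · have hij : (i : ℕ) ≠ (j : ℕ) := by
        intro h
        exact hne (congrArg Sum.inl (Fin.val_injective h))
      rcases lt_or_gt_of_ne hij with h | h
      · exact Set.disjoint_left.mpr fun v hv hv' => (hAA i j h j.isLt v hv v hv').1 rfl
      · exact Set.disjoint_left.mpr fun v hv hv' => (hAA j i h i.isLt v hv' v hv).1 rfl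
    · exact Set.disjoint_left.mpr fun v hv hv' => hAB i.val l.val i.isLt l.isLt v hv hv'
    · exact Set.disjoint_right.mpr fun v hv hv' => hAB j.val k.val j.isLt k.isLt v hv hv'
    · have hkl : (k : ℕ) ≠ (l : ℕ) := by
        intro h
        exact hne (congrArg Sum.inr (Fin.val_injective h))
      rcases lt_or_gt_of_ne hkl with h | h
      · exact Set.disjoint_left.mpr fun v hv hv' => (hBB k l h l.isLt v hv v hv').1 rfl
      · exact Set.disjoint_left.mpr fun v hv hv' => (hBB l k h k.isLt v hv' v hv).1 rfl
  · rintro (i | k) (j | l) hadj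
    · simp at hadj
    · refine ⟨u i.val l.val, ?_, z i.val l.val, ?_, (hzu i.val l.val i.isLt l.isLt).2.1⟩
      · exact (hmemA _ _).2 (hzu i.val l.val i.isLt l.isLt).2.2.2
      · exact (hmemB _ _).2 (Or.inr ⟨i.val, i.isLt, rfl⟩)
    · refine ⟨z j.val k.val, ?_, u j.val k.val, ?_, (hzu j.val k.val j.isLt k.isLt).2.1.symm⟩
      · exact (hmemB _ _).2 (Or.inr ⟨j.val, j.isLt, rfl⟩)
      · exact (hmemA _ _).2 (hzu j.val k.val j.isLt k.isLt).2.2.2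
    · simp at hadj
  · rintro (i | k) (j | l) hne hnadj p hp q hq hadj
    · have hij : (i : ℕ) ≠ (j : ℕ) := by
        intro h
        exact hne (congrArg Sum.inl (Fin.val_injective h))
      rcases lt_or_gt_of_ne hij with h | h
      · exact (hAA i j h j.isLt p hp q hq).2 hadj
      · exact (hAA j i h i.isLt q hq p hp).2 hadj.symm
    · exact hnadj (by simp)
    · exact hnadj (by simp)
    · have hkl : (k : ℕ) ≠ (l : ℕ) := by
        intro h
        exact hne (congrArg Sum.inr (Fin.val_injective h))
      rcases lt_or_gt_of_ne hkl with h | h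
      · exact (hBB k l h l.isLt p hp q hq).2 hadj
      · exact (hBB l k h k.isLt q hq p hp).2 hadj.symm
end

section
/- Let H be a bipartite graph with a bipartition (A,B) such that every vertex in A has degree exactly two in H. Let G be a graph with an induced minor isomorphic to H. Then there is an induced H-model (X_v : v ∈ V(H)) in G such that |V(X_a)| = 1 for all a ∈ A. -/
open SimpleGraph in
lemma connHelper16 {V : Type} (G : SimpleGraph V) (Z T : Set V) (hZT : Z ⊆ T)
    (hZ : ConnectedIn G Z)
    (h : ∀ c ∈ T, ∃ p ∈ Z, ∃ w : G.Walk c p, ∀ v ∈ w.support, v ∈ T) :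
    ConnectedIn G T := by
  obtain ⟨hne, hconn⟩ := hZ
  refine ⟨hne.mono hZT, ?_⟩
  intro a ha b hb
  obtain ⟨p, hp, w1, hw1⟩ := h a ha
  obtain ⟨q, hq, w2, hw2⟩ := h b hb
  obtain ⟨w3, hw3⟩ := hconn p hp q hq
  refine ⟨w1.append (w3.append w2.reverse), ?_⟩
  intro v hv
  rw [SimpleGraph.Walk.mem_support_append_iff] at hv
  rcases hv with hv | hv
  · exact hw1 v hv
  · rw [SimpleGraph.Walk.mem_support_append_iff] at hv
    rcases hv with hv | hv
    · exact hZT (hw3 v hv)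
    · rw [SimpleGraph.Walk.support_reverse, List.mem_reverse] at hv
      exact hw2 v hv

open SimpleGraph in
lemma extend16 {V : Type} (G : SimpleGraph V) (Xa Xb2 : Set V) {u v : V} (p : G.Walk u v) :
    ∀ (Z : Set V),
      ConnectedIn G Z →
      (∀ x ∈ p.support, x ∈ Xa) → (∃ z ∈ Z, G.Adj u z) → (∃ y ∈ Xb2, G.Adj v y) →
      ∃ (t : V) (S : Set V), t ∈ Xa ∧ S ⊆ Xa ∧ (∃ y ∈ Xb2, G.Adj t y) ∧
        (∀ s ∈ S, ∀ y ∈ Xb2, ¬ G.Adj s y) ∧ ConnectedIn G (Z ∪ S) ∧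
        (∃ z ∈ Z ∪ S, G.Adj t z) := by
  induction p with
  | @nil u =>
    intro Z hZ hsupp hu hv
    exact ⟨u, ∅, hsupp u (by simp), Set.empty_subset _, hv, by simp,
      by simpa using hZ, by simpa using hu⟩
  | @cons u u' v h p ih =>
    intro Z hZ hsupp hu hv
    by_cases hub : ∃ y ∈ Xb2, G.Adj u y
    · exact ⟨u, ∅, hsupp u (by simp), Set.empty_subset _, hub, by simp,
        by simpa using hZ, by simpa using hu⟩
    · have hZ' : ConnectedIn G (Z ∪ {u}) := by
        apply connHelper16 G Z _ Set.subset_union_left hZ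
        intro c hc
        rcases hc with hc | hc
        · exact ⟨c, hc, Walk.nil, by intro x hx; simp at hx; subst hx; exact Or.inl hc⟩
        · simp only [Set.mem_singleton_iff] at hc
          subst hc
          obtain ⟨z, hz, huz⟩ := hu
          refine ⟨z, hz, Walk.cons huz Walk.nil, ?_⟩
          intro x hx
          simp only [Walk.support_cons, Walk.support_nil, List.mem_cons,
            List.mem_singleton, List.not_mem_nil, or_false] at hx
          rcases hx with rfl | rfl
          · exact Or.inr rfl
          · exact Or.inl hz
      obtain ⟨t, S', ht, hS', htb, hSn, hconn, htz⟩ :=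
        ih (Z ∪ {u}) hZ' (fun x hx => hsupp x (by simp [hx]))
          ⟨u, Or.inr rfl, h.symm⟩ hv
      have hset : Z ∪ insert u S' = (Z ∪ {u}) ∪ S' := by
        rw [Set.union_assoc, Set.singleton_union]
      refine ⟨t, insert u S', ht, ?_, htb, ?_, ?_, ?_⟩
      · intro s hs
        rcases hs with rfl | hs
        · exact hsupp s (by simp)
        · exact hS' hs
      · push_neg at hub
        intro s hs y hy
        rcases hs with rfl | hs
        · exact hub y hy
        · exact hSn s hs y hy
      · rw [hset]; exact hconn
      · rw [hset]; exact htz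

/-- If `H` is bipartite with bipartition `(A, B)` in which every vertex of
`A` has degree exactly two, and `G` has an induced minor isomorphic to `H`, then there
is an induced `H`-model in `G` whose branch sets over `A` are singletons. -/
theorem statement16 {W V : Type} [Fintype W] [Fintype V] (H : SimpleGraph W)
    (A B : Set W)
    (hcover : ∀ w : W, w ∈ A ∨ w ∈ B) (hdisj : ∀ w : W, ¬ (w ∈ A ∧ w ∈ B))
    (hAstable : ∀ a ∈ A, ∀ a' ∈ A, ¬ H.Adj a a')
    (hBstable : ∀ b ∈ B, ∀ b' ∈ B, ¬ H.Adj b b')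
    (hdeg : ∀ a ∈ A, ({w : W | H.Adj a w}).ncard = 2)
    (G : SimpleGraph V) (hm : InducedMinor H G) :
    ∃ X : W → Set V, IsInducedModel H G X ∧ ∀ a ∈ A, (X a).ncard = 1 := by
  classical
  obtain ⟨X, hXc, hXd, hXadj, hXnadj⟩ := hm
  have key : ∀ a, a ∈ A → ∃ (c1 c2 : W) (t : V) (S : Set V),
      c1 ≠ c2 ∧ ({w : W | H.Adj a w} = {c1, c2}) ∧
      t ∈ X a ∧ S ⊆ X a ∧ (∃ y ∈ X c2, G.Adj t y) ∧
      (∀ s ∈ S, ∀ y ∈ X c2, ¬ G.Adj s y) ∧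
      ConnectedIn G (X c1 ∪ S) ∧ (∃ z ∈ X c1 ∪ S, G.Adj t z) := by
    intro a ha
    obtain ⟨c1, c2, hcne, hcset⟩ := Set.ncard_eq_two.mp (hdeg a ha)
    have hac1 : H.Adj a c1 := by
      have : c1 ∈ ({c1, c2} : Set W) := by simp
      rw [← hcset] at this; exact this
    have hac2 : H.Adj a c2 := by
      have : c2 ∈ ({c1, c2} : Set W) := by simp
      rw [← hcset] at this; exact this
    obtain ⟨u, hu, z, hz, huz⟩ := hXadj a c1 hac1
    obtain ⟨v, hv, y, hy, hvy⟩ := hXadj a c2 hac2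
    obtain ⟨p, hp⟩ := (hXc a).2 u hu v hv
    obtain ⟨t, S, ht, hS, htb, hSn, hconn, htz⟩ :=
      extend16 G (X a) (X c2) p (X c1) (hXc c1) hp ⟨z, hz, huz⟩ ⟨y, hy, hvy⟩
    exact ⟨c1, c2, t, S, hcne, hcset, ht, hS, htb, hSn, hconn, htz⟩
  rcases isEmpty_or_nonempty W with hW | hW
  · exact ⟨X, ⟨hXc, hXd, hXadj, hXnadj⟩, fun a _ => (IsEmpty.false a).elim⟩
  have hV : Nonempty V := by
    obtain ⟨v, _⟩ := (hXc (Classical.arbitrary W)).1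
    exact ⟨v⟩
  choose! b1 b2 t S hbne hbset ht hS htadj hSnadj hconnS htz using key
  have hadjiff : ∀ a ∈ A, ∀ w, H.Adj a w ↔ (w = b1 a ∨ w = b2 a) := by
    intro a ha w
    have : H.Adj a w ↔ w ∈ {w : W | H.Adj a w} := Iff.rfl
    rw [this, hbset a ha]; simp
  have hadj1 : ∀ a ∈ A, H.Adj a (b1 a) := fun a ha =>
    (hadjiff a ha (b1 a)).mpr (Or.inl rfl)
  have hadj2 : ∀ a ∈ A, H.Adj a (b2 a) := fun a ha =>
    (hadjiff a ha (b2 a)).mpr (Or.inr rfl)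
  have hb1nA : ∀ a ∈ A, b1 a ∉ A := fun a ha h => hAstable a ha (b1 a) h (hadj1 a ha)
  have hb2nA : ∀ a ∈ A, b2 a ∉ A := fun a ha h => hAstable a ha (b2 a) h (hadj2 a ha)
  set X' : W → Set V := fun w =>
    if w ∈ A then {t w} else X w ∪ {v | ∃ a, a ∈ A ∧ b1 a = w ∧ v ∈ S a} with hX'def
  -- label lemma
  have hlab : ∀ w x, x ∈ X' w → ∃ ℓ, x ∈ X ℓ ∧
      ((ℓ = w ∧ (w ∈ A → x = t w)) ∨ (ℓ ∈ A ∧ b1 ℓ = w ∧ w ∉ A ∧ x ∈ S ℓ)) := by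
    intro w x hx
    by_cases hw : w ∈ A
    · simp only [hX'def, if_pos hw, Set.mem_singleton_iff] at hx
      subst hx
      exact ⟨w, ht w hw, Or.inl ⟨rfl, fun _ => rfl⟩⟩
    · simp only [hX'def, if_neg hw] at hx
      rcases hx with hx | ⟨a, ha, hba, hxa⟩
      · exact ⟨w, hx, Or.inl ⟨rfl, fun h => absurd h hw⟩⟩
      · exact ⟨a, hS a ha hxa, Or.inr ⟨ha, hba, hw, hxa⟩⟩
  have htnS : ∀ a ∈ A, t a ∉ S a := by
    intro a ha hts
    obtain ⟨y, hy, hty⟩ := htadj a ha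
    exact hSnadj a ha (t a) hts y hy hty
  have hXsub : ∀ w, w ∉ A → X w ⊆ X' w := by
    intro w hw
    simp only [hX'def, if_neg hw]
    exact Set.subset_union_left
  have hSsub : ∀ a ∈ A, S a ⊆ X' (b1 a) := by
    intro a ha x hx
    simp only [hX'def, if_neg (hb1nA a ha)]
    exact Or.inr ⟨a, ha, rfl, hx⟩
  refine ⟨X', ⟨?_, ?_, ?_, ?_⟩, ?_⟩
  -- connectivity
  · intro w
    by_cases hw : w ∈ A
    · simp only [hX'def, if_pos hw]
      refine ⟨⟨t w, rfl⟩, ?_⟩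
      intro a ha b hb
      simp only [Set.mem_singleton_iff] at ha hb
      subst ha; subst hb
      exact ⟨SimpleGraph.Walk.nil, by intro v hv; simp at hv; simp [hv]⟩
    · apply connHelper16 G (X w) _ (hXsub w hw) (hXc w)
      intro c hc
      simp only [hX'def, if_neg hw, Set.mem_union, Set.mem_setOf_eq] at hc
      rcases hc with hc | ⟨a, ha, hba, hca⟩
      · exact ⟨c, hc, SimpleGraph.Walk.nil, by intro v hv; simp at hv; simp [hv, hXsub w hw hc]⟩
      · obtain ⟨pne, pconn⟩ := hconnS a ha
        obtain ⟨q, hq⟩ := (hXc (b1 a)).1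
        have hcmem : c ∈ X (b1 a) ∪ S a := Or.inr hca
        obtain ⟨wk, hwk⟩ := pconn c hcmem q (Or.inl hq)
        refine ⟨q, by rwa [← hba], wk, ?_⟩
        intro v hv
        rcases hwk v hv with hv' | hv'
        · rw [← hba]; exact hXsub (b1 a) (hb1nA a ha) hv'
        · rw [← hba]; exact hSsub a ha hv'
  -- disjointness
  · intro w w' hne
    rw [Set.disjoint_left]
    intro x hx hx'
    obtain ⟨ℓ, hxl, hl⟩ := hlab w x hx
    obtain ⟨ℓ', hxl', hl'⟩ := hlab w' x hx'
    have hll : ℓ = ℓ' := by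
      by_contra hc
      exact (Set.disjoint_left.mp (hXd ℓ ℓ' hc)) hxl hxl'
    subst hll
    rcases hl with ⟨rfl, hta⟩ | ⟨hlA, hbl, hwnA, hxS⟩
    · rcases hl' with ⟨rfl, _⟩ | ⟨hlA, hbl, hw'nA, hxS⟩
      · exact hne rfl
      · -- ℓ = w ∈ A, x = t w and x ∈ S w
        exact htnS ℓ hlA (by rw [← hta hlA]; exact hxS)
    · rcases hl' with ⟨rfl, hta⟩ | ⟨hlA', hbl', _, _⟩
      · exact htnS ℓ hlA (by rw [← hta hlA]; exact hxS)
      · exact hne (hbl ▸ hbl' ▸ rfl)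
  -- required adjacency
  · have hAcase : ∀ a ∈ A, ∀ w', H.Adj a w' → ∃ x ∈ X' a, ∃ y ∈ X' w', G.Adj x y := by
      intro a ha w' haw
      have hw'nA : w' ∉ A := fun h => hAstable a ha w' h haw
      have hxa : t a ∈ X' a := by simp [hX'def, if_pos ha]
      rcases (hadjiff a ha w').mp haw with rfl | rfl
      · obtain ⟨z, hz, htz'⟩ := htz a ha
        rcases hz with hz | hz
        · exact ⟨t a, hxa, z, hXsub (b1 a) hw'nA hz, htz'⟩
        · exact ⟨t a, hxa, z, hSsub a ha hz, htz'⟩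
      · obtain ⟨y, hy, hty⟩ := htadj a ha
        exact ⟨t a, hxa, y, hXsub (b2 a) hw'nA hy, hty⟩
    intro w w' hww
    rcases hcover w with hw | hw
    · exact hAcase w hw w' hww
    · rcases hcover w' with hw' | hw'
      · obtain ⟨x, hx, y, hy, hxy⟩ := hAcase w' hw' w hww.symm
        exact ⟨y, hy, x, hx, hxy.symm⟩
      · exact absurd hww (hBstable w hw w' hw')
  -- non-adjacency
  · intro w w' hne hnadj x hx y hy hxy
    obtain ⟨ℓ, hxl, hl⟩ := hlab w x hx
    obtain ⟨ℓ', hyl, hl'⟩ := hlab w' y hy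
    by_cases hll : ℓ = ℓ'
    · subst hll
      rcases hl with ⟨rfl, _⟩ | ⟨hlA, hbl, _, _⟩
      · rcases hl' with ⟨rfl, _⟩ | ⟨hlA, hbl, _, _⟩
        · exact hne rfl
        · -- w = ℓ ∈ A, b1 w = w'
          exact hnadj (hbl ▸ hadj1 ℓ hlA)
      · rcases hl' with ⟨rfl, _⟩ | ⟨hlA', hbl', _, _⟩
        · exact hnadj ((hbl ▸ hadj1 ℓ hlA).symm)
        · exact hne (hbl ▸ hbl' ▸ rfl)
    · -- ℓ ≠ ℓ' : if ¬H.Adj ℓ ℓ' we contradict the model; else special cases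
      by_cases hH : H.Adj ℓ ℓ'
      · rcases hl with ⟨rfl, _⟩ | ⟨hlA, hbl, _, hxS⟩
        · rcases hl' with ⟨rfl, _⟩ | ⟨hlA', hbl', _, hyS⟩
          · exact hnadj hH
          · -- ℓ = w, ℓ' ∈ A, b1 ℓ' = w', y ∈ S ℓ'
            rcases (hadjiff ℓ' hlA' ℓ).mp hH.symm with hwb | hwb
            · exact hne (hwb.trans hbl')
            · exact hSnadj ℓ' hlA' y hyS x (by rw [← hwb]; exact hxl) hxy.symm
        · rcases hl' with ⟨rfl, _⟩ | ⟨hlA', hbl', _, hyS⟩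
          · rcases (hadjiff ℓ hlA ℓ').mp hH with hwb | hwb
            · exact hne (by rw [hwb, hbl])
            · exact hSnadj ℓ hlA x hxS y (by rw [← hwb]; exact hyl) hxy
          · exact hAstable ℓ hlA ℓ' hlA' hH
      · exact hXnadj ℓ ℓ' hll hH x hxl y hyl hxy
  -- singletons
  · intro a ha
    simp [hX'def, if_pos ha]
end

section
/- Let α,s,t ∈ ℕ⁺. Every graph G that has no induced subgraph isomorphic to K_{s,s}, has no clique of cardinality t, and has at least α^s·t^{s−1} vertices contains a stable set of cardinality α. -/
open Finset

section Statement19Aux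

variable {V : Type} [DecidableEq V]

private def Stab (G : SimpleGraph V) (S : Finset V) : Prop :=
  ∀ x ∈ S, ∀ y ∈ S, x ≠ y → ¬ G.Adj x y

private lemma stab_mono {G : SimpleGraph V} {S T : Finset V} (h : S ⊆ T) (hT : Stab G T) :
    Stab G S := fun x hx y hy hxy => hT x (h hx) y (h hy) hxy

private lemma cliqueBound (G : SimpleGraph V) {t : ℕ} (hfree : G.CliqueFree t)
    (C : Finset V) (hC : ∀ x ∈ C, ∀ y ∈ C, x ≠ y → G.Adj x y) : C.card < t := by
  by_contra h
  obtain ⟨C', hsub, hcard⟩ := Finset.exists_subset_card_eq (le_of_not_gt h)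
  exact hfree C' ⟨fun x hx y hy hxy => hC x (hsub hx) y (hsub hy) hxy, hcard⟩

/-- Ramsey-type bound: a graph with no clique of size `t` and no stable set of
size `k` inside `A` satisfies `|A| < t^(k-1)`. -/
private lemma ramAux (G : SimpleGraph V) [DecidableRel G.Adj] :
    ∀ (n k t : ℕ), k + t ≤ n → ∀ A : Finset V,
      (∀ C ⊆ A, (∀ x ∈ C, ∀ y ∈ C, x ≠ y → G.Adj x y) → C.card < t) →
      (∀ S ⊆ A, Stab G S → S.card < k) →
      A.card < t ^ (k - 1) := by
  intro n
  induction n with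
  | zero =>
      intro k t hn A hC hS
      have hk : k = 0 := by omega
      subst hk
      have := hS ∅ (empty_subset A) (fun x hx => absurd hx (notMem_empty x))
      simp at this
  | succ n ih =>
      intro k t hn A hC hS
      rcases k with _ | k
      · have := hS ∅ (empty_subset A) (fun x hx => absurd hx (notMem_empty x))
        simp at this
      rcases t with _ | t
      · have := hC ∅ (empty_subset A) (fun x hx => absurd hx (notMem_empty x))
        simp at this
      rcases k with _ | k
      · -- no stable singleton inside A, hence A = ∅
        have hA0 : A = ∅ := by
          by_contra hne
          obtain ⟨a, ha⟩ := Finset.nonempty_iff_ne_empty.mpr hne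
          have hst : Stab G {a} := by
            intro x hx y hy hxy
            rw [mem_singleton] at hx hy
            subst hx; subst hy; exact absurd rfl hxy
          have := hS {a} (singleton_subset_iff.mpr ha) hst
          simp at this
        rw [hA0]; simp
      · rcases A.eq_empty_or_nonempty with rfl | ⟨a, ha⟩
        · simpa using Nat.pos_pow_of_pos (k + 2 - 1) (show 0 < t + 1 by omega)
        -- B : neighbours of a inside A ; C : non-neighbours of a inside A
        have hBcard : (A.filter (fun x => G.Adj a x)).card < t ^ (k + 1) := by
          have h := ih (k + 2) t (by omega) (A.filter (fun x => G.Adj a x)) ?_ ?_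
          · simpa using h
          · intro C' hC'sub hC'cl
            have haC' : a ∉ C' := fun hmem => G.irrefl ((mem_filter.mp (hC'sub hmem)).2)
            have h1 : insert a C' ⊆ A := by
              intro x hx
              rcases mem_insert.mp hx with rfl | hx
              · exact ha
              · exact (filter_subset _ _) (hC'sub hx)
            have h2 : ∀ x ∈ insert a C', ∀ y ∈ insert a C', x ≠ y → G.Adj x y := by
              intro x hx y hy hxy
              rcases mem_insert.mp hx with hxa | hx'
              · rcases mem_insert.mp hy with hya | hy'
                · exact absurd (hxa.trans hya.symm) hxy
                · subst hxa; exact (mem_filter.mp (hC'sub hy')).2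
              · rcases mem_insert.mp hy with hya | hy'
                · subst hya; exact ((mem_filter.mp (hC'sub hx')).2).symm
                · exact hC'cl x hx' y hy' hxy
            have h3 := hC (insert a C') h1 h2
            rw [card_insert_of_notMem haC'] at h3
            omega
          · intro S hSs hSst
            exact hS S (hSs.trans (filter_subset _ _)) hSst
        have hCcard : (A.filter (fun x => ¬ G.Adj a x ∧ x ≠ a)).card < (t + 1) ^ k := by
          have h := ih (k + 1) (t + 1) (by omega) (A.filter (fun x => ¬ G.Adj a x ∧ x ≠ a)) ?_ ?_
          · simpa using h
          · intro C' h1 h2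
            exact hC C' (h1.trans (filter_subset _ _)) h2
          · intro S hSsub hSst
            have haS : a ∉ S := fun hmem => ((mem_filter.mp (hSsub hmem)).2).2 rfl
            have h1 : insert a S ⊆ A := by
              intro x hx
              rcases mem_insert.mp hx with rfl | hx
              · exact ha
              · exact (filter_subset _ _) (hSsub hx)
            have h2 : Stab G (insert a S) := by
              intro x hx y hy hxy
              rcases mem_insert.mp hx with hxa | hx'
              · rcases mem_insert.mp hy with hya | hy'
                · exact absurd (hxa.trans hya.symm) hxy
                · subst hxa; exact ((mem_filter.mp (hSsub hy')).2).1
              · rcases mem_insert.mp hy with hya | hy'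
                · subst hya; intro hadj; exact ((mem_filter.mp (hSsub hx')).2).1 hadj.symm
                · exact hSst x hx' y hy' hxy
            have h3 := hS (insert a S) h1 h2
            rw [card_insert_of_notMem haS] at h3
            omega
        have hcover : A ⊆ insert a ((A.filter (fun x => G.Adj a x)) ∪
            (A.filter (fun x => ¬ G.Adj a x ∧ x ≠ a))) := by
          intro x hx
          by_cases h1 : x = a
          · simp [h1]
          · by_cases h2 : G.Adj a x
            · exact mem_insert_of_mem (mem_union_left _ (mem_filter.mpr ⟨hx, h2⟩))
            · exact mem_insert_of_mem (mem_union_right _ (mem_filter.mpr ⟨hx, h2, h1⟩))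
        have hAle : A.card ≤ 1 + (A.filter (fun x => G.Adj a x)).card +
            (A.filter (fun x => ¬ G.Adj a x ∧ x ≠ a)).card := by
          have h1 := card_le_card hcover
          have h2 := card_insert_le a ((A.filter (fun x => G.Adj a x)) ∪
            (A.filter (fun x => ¬ G.Adj a x ∧ x ≠ a)))
          have h3 := card_union_le (A.filter (fun x => G.Adj a x))
            (A.filter (fun x => ¬ G.Adj a x ∧ x ≠ a))
          omega
        have e : (t + 1) ^ (k + 2 - 1) = (t + 1) ^ k * t + (t + 1) ^ k := by
          rw [show k + 2 - 1 = k + 1 by omega, pow_succ]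
          ring
        rw [e]
        have h1 : t ^ (k + 1) ≤ (t + 1) ^ k * t := by
          rw [pow_succ]
          exact Nat.mul_le_mul_right _ (Nat.pow_le_pow_left (by omega) _)
        revert hAle hBcard hCcard h1
        generalize t ^ (k + 1) = P
        generalize (t + 1) ^ k * t = X
        generalize (t + 1) ^ k = Y
        intro h1 h2 h3 h4
        omega

private noncomputable def pickSub (T : Finset V) (s : ℕ) : Finset V :=
  if h : s ≤ T.card then (Finset.exists_subset_card_eq h).choose else T

private lemma pickSub_subset (T : Finset V) (s : ℕ) : pickSub T s ⊆ T := by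
  unfold pickSub
  split_ifs with h
  · exact (Finset.exists_subset_card_eq h).choose_spec.1
  · exact Finset.Subset.refl _

private lemma pickSub_card_of_le {T : Finset V} {s : ℕ} (h : s ≤ T.card) :
    (pickSub T s).card = s := by
  unfold pickSub
  rw [dif_pos h]
  exact (Finset.exists_subset_card_eq h).choose_spec.2

private lemma pickSub_eq_of_lt {T : Finset V} {s : ℕ} (h : ¬ s ≤ T.card) :
    pickSub T s = T := by
  unfold pickSub
  rw [dif_neg h]

private def nbrIn (G : SimpleGraph V) [DecidableRel G.Adj] (M : Finset V) (v : V) : Finset V :=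
  M.filter (fun x => G.Adj x v)

private lemma mem_nbrIn {G : SimpleGraph V} [DecidableRel G.Adj] {M : Finset V} {v x : V} :
    x ∈ nbrIn G M v ↔ x ∈ M ∧ G.Adj x v := mem_filter

private noncomputable def keyOf (G : SimpleGraph V) [DecidableRel G.Adj] (M : Finset V)
    (s : ℕ) (v : V) : Finset V := pickSub (nbrIn G M v) s

private lemma keyOf_subset {G : SimpleGraph V} [DecidableRel G.Adj] {M : Finset V}
    {s : ℕ} {v : V} : keyOf G M s v ⊆ nbrIn G M v := pickSub_subset _ _

private lemma keyOf_card_of_le {G : SimpleGraph V} [DecidableRel G.Adj] {M : Finset V}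
    {s : ℕ} {v : V} (h : s ≤ (nbrIn G M v).card) : (keyOf G M s v).card = s :=
  pickSub_card_of_le h

private lemma keyOf_eq_of_lt {G : SimpleGraph V} [DecidableRel G.Adj] {M : Finset V}
    {s : ℕ} {v : V} (h : ¬ s ≤ (nbrIn G M v).card) : keyOf G M s v = nbrIn G M v :=
  pickSub_eq_of_lt h

private lemma sum_choose_le' (N s : ℕ) : ∑ i ∈ range (s + 1), N.choose i ≤ (N + s).choose s := by
  induction s with
  | zero => simp
  | succ s ih =>
      rw [sum_range_succ]
      have h1 : N.choose (s + 1) ≤ (N + s).choose (s + 1) :=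
        Nat.choose_le_choose _ (by omega)
      have h2 : (N + (s + 1)).choose (s + 1) = (N + s).choose s + (N + s).choose (s + 1) := by
        rw [show N + (s + 1) = (N + s) + 1 by omega]
        exact Nat.choose_succ_succ _ _
      omega

private lemma choose_add_le_pow' (N s : ℕ) : (N + s).choose s ≤ (N + 1) ^ s := by
  induction s with
  | zero => simp
  | succ s ih =>
      have key := Nat.add_one_mul_choose_eq (N + s) s
      have h2 : (N + s + 1) * ((N + s).choose s) ≤ ((N + 1) * (s + 1)) * (N + 1) ^ s := by
        have hb : N + s + 1 ≤ (N + 1) * (s + 1) := by nlinarith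
        exact Nat.mul_le_mul hb ih
      have h3 : ((N + 1) * (s + 1)) * (N + 1) ^ s = ((N + 1) ^ (s + 1)) * (s + 1) := by
        rw [pow_succ]; ring
      have h4 : (N + s + 1).choose (s + 1) * (s + 1) ≤ ((N + 1) ^ (s + 1)) * (s + 1) := by
        rw [← key]
        exact h2.trans (le_of_eq h3)
      show (N + s + 1).choose (s + 1) ≤ (N + 1) ^ (s + 1)
      exact Nat.le_of_mul_le_mul_right h4 (by omega)

private lemma commonNbhdBound {V : Type} [Fintype V] [DecidableEq V] (G : SimpleGraph V)
    [DecidableRel G.Adj] {s t : ℕ}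
    (hKss : IsEmpty (completeBipartiteGraph (Fin s) (Fin s) ↪g G))
    (hfree : G.CliqueFree t) (T : Finset V) (hT : Stab G T) (hTcard : T.card = s) :
    (univ.filter (fun v => ∀ x ∈ T, G.Adj x v)).card < t ^ (s - 1) := by
  apply ramAux G (s + t) s t le_rfl
  · intro C _ hC
    exact cliqueBound G hfree C hC
  · intro S hSsub hSstab
    by_contra hge
    push_neg at hge
    obtain ⟨S', hS'sub, hS'card⟩ := Finset.exists_subset_card_eq hge
    have hS'stab : Stab G S' := stab_mono hS'sub hSstab
    have hS'adj : ∀ v ∈ S', ∀ x ∈ T, G.Adj x v := by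
      intro v hv x hx
      exact (mem_filter.mp (hSsub (hS'sub hv))).2 x hx
    have hdisj : ∀ x ∈ T, x ∉ S' := by
      intro x hxT hxS
      exact G.irrefl (hS'adj x hxS x hxT)
    have eT : Fin s ≃ {x // x ∈ T} := (T.equivFin.trans (finCongr hTcard)).symm
    have eS : Fin s ≃ {x // x ∈ S'} := (S'.equivFin.trans (finCongr hS'card)).symm
    set f : Fin s ⊕ Fin s → V :=
      Sum.elim (fun i => ((eT i : {x // x ∈ T}) : V)) (fun i => ((eS i : {x // x ∈ S'}) : V))
      with hf
    have hfT : ∀ i, f (Sum.inl i) ∈ T := fun i => (eT i).2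
    have hfS : ∀ i, f (Sum.inr i) ∈ S' := fun i => (eS i).2
    have hinj : Function.Injective f := by
      intro a b hab
      rcases a with i | i <;> rcases b with j | j
      · have : (eT i : V) = (eT j : V) := hab
        exact congrArg Sum.inl (eT.injective (Subtype.ext this))
      · exfalso
        have h1 := hfT i
        have h2 := hfS j
        rw [← hab] at h2
        exact hdisj _ h1 h2
      · exfalso
        have h1 := hfT j
        have h2 := hfS i
        rw [hab] at h2
        exact hdisj _ h1 h2
      · have : (eS i : V) = (eS j : V) := hab
        exact congrArg Sum.inr (eS.injective (Subtype.ext this))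
    have hmap : ∀ a b, G.Adj (f a) (f b) ↔ (completeBipartiteGraph (Fin s) (Fin s)).Adj a b := by
      intro a b
      rcases a with i | i <;> rcases b with j | j
      · constructor
        · intro h
          by_cases hij : i = j
          · subst hij; exact absurd h (G.irrefl)
          · exact absurd h
              (hT _ (hfT i) _ (hfT j) (fun he => hij (eT.injective (Subtype.ext he))))
        · intro h; simp [completeBipartiteGraph] at h
      · constructor
        · intro _; simp [completeBipartiteGraph]
        · intro _; exact hS'adj _ (hfS j) _ (hfT i)
      · constructor
        · intro _; simp [completeBipartiteGraph]
        · intro _; exact (hS'adj _ (hfS i) _ (hfT j)).symm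
      · constructor
        · intro h
          by_cases hij : i = j
          · subst hij; exact absurd h (G.irrefl)
          · exact absurd h
              (hS'stab _ (hfS i) _ (hfS j) (fun he => hij (eS.injective (Subtype.ext he))))
        · intro h; simp [completeBipartiteGraph] at h
    exact (hKss.false ⟨⟨f, hinj⟩, fun {a b} => hmap a b⟩).elim

end Statement19Aux

/-- Every `K_{s,s}`-free (as induced subgraph) and `K_t`-free graph on at
least `α^s · t^{s−1}` vertices has a stable set of cardinality `α`. -/
theorem statement19 {V : Type} [Fintype V] (α s t : ℕ) (hα : 1 ≤ α) (hs : 1 ≤ s)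
    (ht : 1 ≤ t) (G : SimpleGraph V)
    (hKss : IsEmpty (completeBipartiteGraph (Fin s) (Fin s) ↪g G))
    (hfree : G.CliqueFree t)
    (hcard : α ^ s * t ^ (s - 1) ≤ Fintype.card V) :
    ∃ S : Finset V, S.card = α ∧ ∀ x ∈ S, ∀ y ∈ S, x ≠ y → ¬ G.Adj x y := by
  classical
  obtain ⟨M, hMmem, hMmax⟩ := Finset.exists_max_image
      ((univ : Finset (Finset V)).filter (fun S => Stab G S)) Finset.card
      ⟨∅, mem_filter.mpr ⟨mem_univ _, fun x hx => absurd hx (notMem_empty x)⟩⟩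
  have hMstab : Stab G M := (mem_filter.mp hMmem).2
  have hmax : ∀ S : Finset V, Stab G S → S.card ≤ M.card :=
    fun S hS => hMmax S (mem_filter.mpr ⟨mem_univ _, hS⟩)
  by_cases hαm : α ≤ M.card
  · obtain ⟨S, hSsub, hScard⟩ := Finset.exists_subset_card_eq hαm
    exact ⟨S, hScard, stab_mono hSsub hMstab⟩
  · exfalso
    push_neg at hαm
    -- A : vertices outside M ; K : possible keys
    set A : Finset V := (univ : Finset V) \ M with hA
    set K : Finset (Finset V) := (range s).biUnion (fun i => M.powersetCard (i + 1)) with hK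
    have hTvne : ∀ v ∈ A, (nbrIn G M v).Nonempty := by
      intro v hv
      rcases (nbrIn G M v).eq_empty_or_nonempty with he | h
      · exfalso
        have hvM : v ∉ M := (mem_sdiff.mp hv).2
        have hstab : Stab G (insert v M) := by
          intro x hx y hy hxy
          rcases mem_insert.mp hx with hxa | hx'
          · rcases mem_insert.mp hy with hya | hy'
            · exact absurd (hxa.trans hya.symm) hxy
            · intro hadj
              rw [hxa] at hadj
              have hmem : y ∈ nbrIn G M v := mem_nbrIn.mpr ⟨hy', hadj.symm⟩
              rw [he] at hmem
              exact absurd hmem (notMem_empty y)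
          · rcases mem_insert.mp hy with hya | hy'
            · intro hadj
              rw [hya] at hadj
              have hmem : x ∈ nbrIn G M v := mem_nbrIn.mpr ⟨hx', hadj⟩
              rw [he] at hmem
              exact absurd hmem (notMem_empty x)
            · exact hMstab x hx' y hy' hxy
        have h1 := hmax _ hstab
        rw [card_insert_of_notMem hvM] at h1
        omega
      · exact h
    have hKmem : ∀ v ∈ A, keyOf G M s v ∈ K := by
      intro v hv
      have h1 : 1 ≤ (nbrIn G M v).card := card_pos.mpr (hTvne v hv)
      by_cases hb : s ≤ (nbrIn G M v).card
      · refine mem_biUnion.mpr ⟨s - 1, mem_range.mpr (by omega), mem_powersetCard.mpr ⟨?_, ?_⟩⟩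
        · exact keyOf_subset.trans (filter_subset _ _)
        · rw [keyOf_card_of_le hb]; omega
      · refine mem_biUnion.mpr ⟨(nbrIn G M v).card - 1, mem_range.mpr (by omega),
          mem_powersetCard.mpr ⟨?_, ?_⟩⟩
        · rw [keyOf_eq_of_lt hb]; exact filter_subset _ _
        · rw [keyOf_eq_of_lt hb]; omega
    -- each fiber has fewer than t^(s-1) elements
    have hfib : ∀ T ∈ K, (A.filter (fun v => keyOf G M s v = T)).card + 1 ≤ t ^ (s - 1) := by
      intro T hT
      obtain ⟨i, hi, hTi⟩ := mem_biUnion.mp hT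
      rw [mem_range] at hi
      obtain ⟨hTM, hTcard⟩ := mem_powersetCard.mp hTi
      by_cases hcs : T.card = s
      · -- the fiber is inside the common neighbourhood of the stable s-set T
        have hsub : (A.filter (fun v => keyOf G M s v = T)) ⊆
            univ.filter (fun v => ∀ x ∈ T, G.Adj x v) := by
          intro v hv
          obtain ⟨hvA, hkv⟩ := mem_filter.mp hv
          have hbig : s ≤ (nbrIn G M v).card := by
            by_contra hlt
            have h2 : nbrIn G M v = T := by rw [← keyOf_eq_of_lt hlt]; exact hkv
            have h3 : (nbrIn G M v).card = s := by rw [h2]; exact hcs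
            omega
          have h2 : T ⊆ nbrIn G M v := by rw [← hkv]; exact keyOf_subset
          exact mem_filter.mpr ⟨mem_univ _, fun x hx => (mem_nbrIn.mp (h2 hx)).2⟩
        have hCN := commonNbhdBound G hKss hfree T (stab_mono hTM hMstab) hcs
        have h3 := card_le_card hsub
        omega
      · -- small key: the fiber has no stable set of size T.card + 1
        have hTlt : T.card < s := by omega
        have h := ramAux G (T.card + 1 + t) (T.card + 1) t le_rfl
            (A.filter (fun v => keyOf G M s v = T)) ?_ ?_
        · have hle : t ^ T.card ≤ t ^ (s - 1) := Nat.pow_le_pow_right (by omega) (by omega)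
          simp only [Nat.add_sub_cancel] at h
          omega
        · intro C _ hCcl
          exact cliqueBound G hfree C hCcl
        · intro S hSsub hSstab
          by_contra hSge
          push_neg at hSge
          have hkeyv : ∀ v ∈ S, nbrIn G M v = T := by
            intro v hv
            have hkv := (mem_filter.mp (hSsub hv)).2
            by_cases hb : s ≤ (nbrIn G M v).card
            · exfalso
              have h1 : (keyOf G M s v).card = s := keyOf_card_of_le hb
              rw [hkv] at h1
              omega
            · rw [← keyOf_eq_of_lt hb]; exact hkv
          have hSA : ∀ v ∈ S, v ∉ M :=
            fun v hv => (mem_sdiff.mp (mem_filter.mp (hSsub hv)).1).2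
          have hdisj2 : Disjoint S (M \ T) := by
            rw [disjoint_left]
            intro x hxS hxM
            exact hSA x hxS (mem_sdiff.mp hxM).1
          have hstab : Stab G (S ∪ (M \ T)) := by
            intro x hx y hy hxy
            rcases mem_union.mp hx with hxS | hxM <;> rcases mem_union.mp hy with hyS | hyM
            · exact hSstab x hxS y hyS hxy
            · intro hadj
              have hyM' := mem_sdiff.mp hyM
              have hmem : y ∈ nbrIn G M x := mem_nbrIn.mpr ⟨hyM'.1, hadj.symm⟩
              rw [hkeyv x hxS] at hmem
              exact hyM'.2 hmem
            · intro hadj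
              have hxM' := mem_sdiff.mp hxM
              have hmem : x ∈ nbrIn G M y := mem_nbrIn.mpr ⟨hxM'.1, hadj⟩
              rw [hkeyv y hyS] at hmem
              exact hxM'.2 hmem
            · exact hMstab x (mem_sdiff.mp hxM).1 y (mem_sdiff.mp hyM).1 hxy
          have hcard2 : (S ∪ (M \ T)).card = S.card + (M.card - T.card) := by
            rw [card_union_of_disjoint hdisj2, card_sdiff_of_subset hTM]
          have h4 := hmax _ hstab
          have hTm : T.card ≤ M.card := card_le_card hTM
          omega
    -- assemble the counting
    have hAcard : A.card = ∑ T ∈ K, (A.filter (fun v => keyOf G M s v = T)).card :=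
      card_eq_sum_card_fiberwise hKmem
    have hAle : A.card ≤ K.card * (t ^ (s - 1) - 1) := by
      rw [hAcard]
      calc ∑ T ∈ K, (A.filter (fun v => keyOf G M s v = T)).card
          ≤ ∑ _T ∈ K, (t ^ (s - 1) - 1) :=
            sum_le_sum (fun T hT => by have := hfib T hT; omega)
        _ = K.card * (t ^ (s - 1) - 1) := by rw [sum_const, smul_eq_mul]
    have hKle : K.card + 1 ≤ α ^ s := by
      have h1 : K.card ≤ ∑ i ∈ range s, M.card.choose (i + 1) := by
        calc K.card ≤ ∑ i ∈ range s, (M.powersetCard (i + 1)).card := card_biUnion_le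
          _ = ∑ i ∈ range s, M.card.choose (i + 1) := by
              exact sum_congr rfl (fun i _ => card_powersetCard _ _)
      have h2 : (∑ i ∈ range s, M.card.choose (i + 1)) + 1 ≤ (M.card + s).choose s := by
        have h3 := sum_choose_le' M.card s
        rw [sum_range_succ'] at h3
        simpa using h3
      have h4 : (M.card + s).choose s ≤ (M.card + 1) ^ s := choose_add_le_pow' _ _
      have h5 : (M.card + 1) ^ s ≤ α ^ s := Nat.pow_le_pow_left (by omega) _
      omega
    have hn : Fintype.card V = M.card + A.card := by
      have h1 : A.card = (univ : Finset V).card - M.card := card_sdiff_of_subset (subset_univ M)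
      have h2 : M.card ≤ (univ : Finset V).card := card_le_univ M
      rw [card_univ] at h1 h2
      omega
    have hq : 1 ≤ t ^ (s - 1) := Nat.one_le_pow _ _ (by omega)
    have hp : α ≤ α ^ s := Nat.le_self_pow (by omega) _
    obtain ⟨P, hP⟩ : ∃ P, α ^ s = P + 1 := ⟨α ^ s - 1, by omega⟩
    obtain ⟨Q, hQ⟩ : ∃ Q, t ^ (s - 1) = Q + 1 := ⟨t ^ (s - 1) - 1, by omega⟩
    have hmul : K.card * (t ^ (s - 1) - 1) ≤ P * Q := by
      have h1 : K.card ≤ P := by omega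
      have h2 : t ^ (s - 1) - 1 = Q := by omega
      rw [h2]
      exact Nat.mul_le_mul_right _ h1
    have hAR : A.card ≤ P * Q := hAle.trans hmul
    have hexp : α ^ s * t ^ (s - 1) = P * Q + P + Q + 1 := by rw [hP, hQ]; ring
    rw [hexp] at hcard
    obtain ⟨R, hR⟩ : ∃ R, P * Q = R := ⟨_, rfl⟩
    rw [hR] at hcard hAR
    omega
end
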